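/- arXiv:0709.2326 — 8 statements merged into one kernel-verified Lean document; each statement's English description precedes it below -/
import Mathlib

section
/- Let n ≥ 1 and let Ω_1, Ω_0, Ω_{−1} be real symmetric 2n×2n matrices with Ω_1 positive semidefinite and −Ω_{−1} positive semidefinite. Let J be the 2n×2n real block matrix [[0, −I_n],[I_n, 0]]. Suppose v : (0,∞) → ℝ^{2n} is differentiable and satisfies v′(x) = J (x Ω_1 + Ω_0 + x^{−1} Ω_{−1}) v(x) for all x > 0, that v is bounded, that ∫_0^∞ ‖v(x)‖² dx < ∞ and ∫_0^∞ ‖v(x)/x‖² dx < ∞, and that ‖v(x)‖ → 0 as x → ∞. Then for all x, y > 0 with x ≠ y: ⟨J v(x), v(y)⟩/(x−y) = ∫_0^∞ [ ⟨Ω_1 v(x+t), v(y+t)⟩ − (1/((x+t)(y+t))) ⟨Ω_{−1} v(x+t), v(y+t)⟩ ] dt. -/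
open Matrix MeasureTheory Set Filter

private lemma shiftInt' {h : ℝ → ℝ} (hint : IntegrableOn h (Ioi (0:ℝ))) {x : ℝ} (hx : 0 < x) :
    IntegrableOn (fun t => h (x + t)) (Ioi (0:ℝ)) := by
  have h1 : IntegrableOn h (Ioi x) := hint.mono_set (Ioi_subset_Ioi hx.le)
  have e : MeasurePreserving (fun t : ℝ => x + t) volume volume :=
    measurePreserving_add_left volume x
  have emb : MeasurableEmbedding (fun t : ℝ => x + t) :=
    (MeasurableEquiv.addLeft x).measurableEmbedding
  have h2 := (e.integrableOn_comp_preimage emb (f := h) (s := Ioi x)).2 h1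
  have hpre : (fun t : ℝ => x + t) ⁻¹' Ioi x = Ioi 0 := by ext t; simp
  rwa [hpre] at h2

private lemma innerdot' (a b : EuclideanSpace ℝ (Fin n ⊕ Fin n)) :
    (inner ℝ a b : ℝ) = (a : (Fin n ⊕ Fin n) → ℝ) ⬝ᵥ (b : (Fin n ⊕ Fin n) → ℝ) := by
  simp [PiLp.inner_apply, dotProduct, mul_comm]

set_option maxHeartbeats 1000000 in
/-- Factorization of the integrable kernel `⟨J v(x), v(y)⟩/(x−y)` arising
from the differential equation `v′(x) = J(xΩ₁ + Ω₀ + x⁻¹Ω₋₁)v(x)` with `Ω₁ ⪰ 0` and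
`−Ω₋₁ ⪰ 0`, as the kernel of `Γ_φ*Γ_φ`. -/
theorem integrable_kernel_hankel_factorization
    (n : ℕ) (hn : 1 ≤ n)
    (Ω₁ Ω₀ Ωₘ : Matrix (Fin n ⊕ Fin n) (Fin n ⊕ Fin n) ℝ)
    (hΩ₁symm : Ω₁.IsSymm) (hΩ₀symm : Ω₀.IsSymm) (hΩₘsymm : Ωₘ.IsSymm)
    (hΩ₁pos : Ω₁.PosSemidef) (hΩₘneg : (-Ωₘ).PosSemidef)
    (J : Matrix (Fin n ⊕ Fin n) (Fin n ⊕ Fin n) ℝ)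
    (hJ : J = Matrix.fromBlocks 0 (-1) 1 0)
    (v : ℝ → EuclideanSpace ℝ (Fin n ⊕ Fin n))
    (hode : ∀ x : ℝ, 0 < x →
      HasDerivAt v (WithLp.toLp 2 (J.mulVec ((x • Ω₁ + Ω₀ + x⁻¹ • Ωₘ).mulVec (v x)))) x)
    (hbdd : ∃ C : ℝ, ∀ x : ℝ, 0 < x → ‖v x‖ ≤ C)
    (hL2 : IntegrableOn (fun x => ‖v x‖ ^ 2) (Ioi (0 : ℝ)))
    (hL2' : IntegrableOn (fun x => ‖(x : ℝ)⁻¹ • v x‖ ^ 2) (Ioi (0 : ℝ)))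
    (hdecay : Tendsto (fun x => ‖v x‖) atTop (nhds 0)) :
    ∀ x y : ℝ, 0 < x → 0 < y → x ≠ y →
      (J.mulVec (v x)) ⬝ᵥ (v y) / (x - y) =
        ∫ t in Ioi (0 : ℝ),
          ((Ω₁.mulVec (v (x + t))) ⬝ᵥ (v (y + t))
            - (1 / ((x + t) * (y + t))) * ((Ωₘ.mulVec (v (x + t))) ⬝ᵥ (v (y + t)))) := by
  intro x y hx hy hxy
  have hsub : x - y ≠ 0 := sub_ne_zero.mpr hxy
  -- matrix facts
  have hJT : Jᵀ = -J := by
    rw [hJ]; simp [Matrix.fromBlocks_transpose, Matrix.fromBlocks_neg]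
  have hJJ : J * J = -1 := by
    rw [hJ, Matrix.fromBlocks_multiply, ← Matrix.fromBlocks_one, Matrix.fromBlocks_neg]; simp
  set A : ℝ → Matrix (Fin n ⊕ Fin n) (Fin n ⊕ Fin n) ℝ := fun s => s • Ω₁ + Ω₀ + s⁻¹ • Ωₘ with hA
  have hAsymm : ∀ s : ℝ, (A s)ᵀ = A s := by
    intro s
    simp [hA, Matrix.transpose_add, Matrix.transpose_smul, hΩ₁symm.eq, hΩ₀symm.eq, hΩₘsymm.eq]
  -- CLMs
  set Jc : EuclideanSpace ℝ (Fin n ⊕ Fin n) →L[ℝ] EuclideanSpace ℝ (Fin n ⊕ Fin n) :=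
    LinearMap.toContinuousLinearMap (Matrix.toEuclideanLin J) with hJcdef
  set Ω₁c : EuclideanSpace ℝ (Fin n ⊕ Fin n) →L[ℝ] EuclideanSpace ℝ (Fin n ⊕ Fin n) :=
    LinearMap.toContinuousLinearMap (Matrix.toEuclideanLin Ω₁) with hΩ₁cdef
  set Ωₘc : EuclideanSpace ℝ (Fin n ⊕ Fin n) →L[ℝ] EuclideanSpace ℝ (Fin n ⊕ Fin n) :=
    LinearMap.toContinuousLinearMap (Matrix.toEuclideanLin Ωₘ) with hΩₘcdef
  have hJc : ∀ a : EuclideanSpace ℝ (Fin n ⊕ Fin n), Jc a = J.mulVec a := fun a => rfl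
  have hΩ₁c : ∀ a : EuclideanSpace ℝ (Fin n ⊕ Fin n), Ω₁c a = Ω₁.mulVec a := fun a => rfl
  have hΩₘc : ∀ a : EuclideanSpace ℝ (Fin n ⊕ Fin n), Ωₘc a = Ωₘ.mulVec a := fun a => rfl
  -- dot product estimate
  have dot_le : ∀ (Mc : EuclideanSpace ℝ (Fin n ⊕ Fin n) →L[ℝ] EuclideanSpace ℝ (Fin n ⊕ Fin n))
      (u w : EuclideanSpace ℝ (Fin n ⊕ Fin n)), |(inner ℝ (Mc u) w : ℝ)| ≤ ‖Mc‖ * ‖u‖ * ‖w‖ := by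
    intro Mc u w
    calc |(inner ℝ (Mc u) w : ℝ)| ≤ ‖Mc u‖ * ‖w‖ := abs_real_inner_le_norm _ _
      _ ≤ ‖Mc‖ * ‖u‖ * ‖w‖ :=
        mul_le_mul_of_nonneg_right (Mc.le_opNorm u) (norm_nonneg _)
  -- functions
  set g : ℝ → ℝ := fun t =>
    (Ω₁.mulVec (v (x + t))) ⬝ᵥ (v (y + t))
      - (1 / ((x + t) * (y + t))) * ((Ωₘ.mulVec (v (x + t))) ⬝ᵥ (v (y + t))) with hg
  set f : ℝ → ℝ := fun t => ((J.mulVec (v (x + t))) ⬝ᵥ (v (y + t))) / (x - y) with hf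
  -- shifted derivative
  have hshift : ∀ (c t : ℝ), 0 < c + t →
      HasDerivAt (fun s => v (c + s)) (WithLp.toLp 2 (J.mulVec ((A (c + t)).mulVec (v (c + t))))) t := by
    intro c t hct
    have h1 : HasDerivAt (fun s : ℝ => c + s) 1 t := (hasDerivAt_id t).const_add c
    have h2 := (hode (c + t) hct).scomp t h1
    rw [one_smul] at h2
    exact h2
  -- dot product algebra
  have claim1 : ∀ u w : (Fin n ⊕ Fin n) → ℝ, (J.mulVec u) ⬝ᵥ (J.mulVec w) = u ⬝ᵥ w := by
    intro u w
    rw [Matrix.dotProduct_mulVec, ← Matrix.mulVec_transpose, Matrix.mulVec_mulVec, hJT,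
      Matrix.neg_mul, hJJ, neg_neg, Matrix.one_mulVec]
  have claim2 : ∀ u : (Fin n ⊕ Fin n) → ℝ, J.mulVec (J.mulVec u) = -u := by
    intro u
    rw [Matrix.mulVec_mulVec, hJJ, Matrix.neg_mulVec, Matrix.one_mulVec]
  have claim3 : ∀ (M : Matrix (Fin n ⊕ Fin n) (Fin n ⊕ Fin n) ℝ), Mᵀ = M → ∀ u w : (Fin n ⊕ Fin n) → ℝ,
      u ⬝ᵥ (M.mulVec w) = (M.mulVec u) ⬝ᵥ w := by
    intro M hM u w
    rw [Matrix.dotProduct_mulVec, ← Matrix.mulVec_transpose, hM]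
  -- derivative of f
  have hderiv : ∀ t : ℝ, 0 ≤ t → HasDerivAt f (-(g t)) t := by
    intro t ht
    have hxt : 0 < x + t := by linarith
    have hyt : 0 < y + t := by linarith
    have hvx := hshift x t hxt
    have hvy := hshift y t hyt
    have hJvx : HasDerivAt (fun s => Jc (v (x + s)))
        (Jc (WithLp.toLp 2 (J.mulVec ((A (x + t)).mulVec (v (x + t)))))) t :=
      Jc.hasFDerivAt.comp_hasDerivAt t hvx
    have hIn := (hJvx.inner ℝ hvy).div_const (x - y)
    have hval : ((inner ℝ (Jc (v (x + t))) (WithLp.toLp 2 (J.mulVec ((A (y + t)).mulVec (v (y + t))))) : ℝ)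
        + (inner ℝ (Jc (WithLp.toLp 2 (J.mulVec ((A (x + t)).mulVec (v (x + t)))))) (v (y + t)) : ℝ)) / (x - y)
        = -(g t) := by
      simp only [innerdot', hJc, WithLp.ofLp_toLp]
      rw [claim1, claim2, claim3 _ (hAsymm (y + t)), hg]
      simp only [hA, Matrix.add_mulVec, Matrix.smul_mulVec, add_dotProduct,
        smul_dotProduct, neg_dotProduct, smul_eq_mul]
      field_simp
      ring
    rw [hval] at hIn
    simpa only [innerdot', hJc] using hIn
  -- continuity of shifted v
  have hvcont : ∀ (c : ℝ), 0 < c → ContinuousOn (fun t => v (c + t)) (Ioi (0:ℝ)) := by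
    intro c hc t ht
    have hct : 0 < c + t := by have := ht.out; linarith
    exact ((hode (c + t) hct).continuousAt.comp
      ((continuous_const.add continuous_id).continuousAt)).continuousWithinAt
  -- integrability of g
  have hgmeas : AEStronglyMeasurable g (volume.restrict (Ioi (0:ℝ))) := by
    have hcont : ContinuousOn g (Ioi (0:ℝ)) := by
      have e1 : ContinuousOn (fun t => (Ω₁.mulVec (v (x + t))) ⬝ᵥ (v (y + t))) (Ioi (0:ℝ)) := by
        have : ContinuousOn (fun t => (inner ℝ (Ω₁c (v (x + t))) (v (y + t)) : ℝ)) (Ioi (0:ℝ)) :=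
          (Ω₁c.continuous.comp_continuousOn (hvcont x hx)).inner (hvcont y hy)
        simpa only [innerdot', hΩ₁c] using this
      have e2 : ContinuousOn (fun t => (Ωₘ.mulVec (v (x + t))) ⬝ᵥ (v (y + t))) (Ioi (0:ℝ)) := by
        have : ContinuousOn (fun t => (inner ℝ (Ωₘc (v (x + t))) (v (y + t)) : ℝ)) (Ioi (0:ℝ)) :=
          (Ωₘc.continuous.comp_continuousOn (hvcont x hx)).inner (hvcont y hy)
        simpa only [innerdot', hΩₘc] using this
      have e3 : ContinuousOn (fun t => 1 / ((x + t) * (y + t))) (Ioi (0:ℝ)) := by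
        apply ContinuousOn.div continuousOn_const
        · exact ((continuousOn_const.add continuousOn_id).mul
            (continuousOn_const.add continuousOn_id))
        · intro t ht
          have h1 : 0 < x + t := by have := ht.out; linarith
          have h2 : 0 < y + t := by have := ht.out; linarith
          positivity
      exact e1.sub (e3.mul e2)
    exact hcont.aestronglyMeasurable measurableSet_Ioi
  set φ : ℝ → ℝ := fun t =>
    ‖Ω₁c‖ * (‖v (x + t)‖ ^ 2 + ‖v (y + t)‖ ^ 2) / 2
      + ‖Ωₘc‖ * (‖(x + t)⁻¹ • v (x + t)‖ ^ 2 + ‖(y + t)⁻¹ • v (y + t)‖ ^ 2) / 2 with hφ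
  have hφint : IntegrableOn φ (Ioi (0:ℝ)) := by
    have i1 := shiftInt' hL2 hx
    have i2 := shiftInt' hL2 hy
    have i3 := shiftInt' hL2' hx
    have i4 := shiftInt' hL2' hy
    apply Integrable.add
    · exact (((i1.add i2).const_mul ‖Ω₁c‖).div_const 2)
    · exact (((i3.add i4).const_mul ‖Ωₘc‖).div_const 2)
  have hgint : IntegrableOn g (Ioi (0:ℝ)) := by
    apply Integrable.mono' hφint hgmeas
    rw [ae_restrict_iff' measurableSet_Ioi]
    refine ae_of_all _ fun t ht => ?_
    have ht0 : (0:ℝ) < t := ht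
    have hxt : 0 < x + t := by linarith
    have hyt : 0 < y + t := by linarith
    have b1 : |(Ω₁.mulVec (v (x + t))) ⬝ᵥ (v (y + t))|
        ≤ ‖Ω₁c‖ * ‖v (x + t)‖ * ‖v (y + t)‖ := by
      have h := dot_le Ω₁c (v (x + t)) (v (y + t))
      simp only [innerdot', hΩ₁c] at h
      exact h
    have b2 : |(1 / ((x + t) * (y + t))) * ((Ωₘ.mulVec (v (x + t))) ⬝ᵥ (v (y + t)))|
        ≤ ‖Ωₘc‖ * ‖(x + t)⁻¹ • v (x + t)‖ * ‖(y + t)⁻¹ • v (y + t)‖ := by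
      have hEq : (1 / ((x + t) * (y + t))) * ((Ωₘ.mulVec (v (x + t))) ⬝ᵥ (v (y + t)))
          = (inner ℝ (Ωₘc ((x + t)⁻¹ • v (x + t))) ((y + t)⁻¹ • v (y + t)) : ℝ) := by
        rw [Ωₘc.map_smul, real_inner_smul_left, real_inner_smul_right]
        simp only [innerdot', hΩₘc]
        field_simp
      rw [hEq]
      exact dot_le Ωₘc _ _
    have n1 : ‖v (x + t)‖ * ‖v (y + t)‖ ≤ (‖v (x + t)‖ ^ 2 + ‖v (y + t)‖ ^ 2) / 2 := by
      nlinarith [sq_nonneg (‖v (x + t)‖ - ‖v (y + t)‖)]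
    have n2 : ‖(x + t)⁻¹ • v (x + t)‖ * ‖(y + t)⁻¹ • v (y + t)‖
        ≤ (‖(x + t)⁻¹ • v (x + t)‖ ^ 2 + ‖(y + t)⁻¹ • v (y + t)‖ ^ 2) / 2 := by
      nlinarith [sq_nonneg (‖(x + t)⁻¹ • v (x + t)‖ - ‖(y + t)⁻¹ • v (y + t)‖)]
    have hnn1 : (0:ℝ) ≤ ‖Ω₁c‖ := norm_nonneg _
    have hnn2 : (0:ℝ) ≤ ‖Ωₘc‖ := norm_nonneg _
    have : ‖g t‖ ≤ |(Ω₁.mulVec (v (x + t))) ⬝ᵥ (v (y + t))|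
        + |(1 / ((x + t) * (y + t))) * ((Ωₘ.mulVec (v (x + t))) ⬝ᵥ (v (y + t)))| := by
      simp only [hg, Real.norm_eq_abs]
      exact abs_sub _ _
    have c1 : ‖Ω₁c‖ * ‖v (x + t)‖ * ‖v (y + t)‖
        ≤ ‖Ω₁c‖ * ((‖v (x + t)‖ ^ 2 + ‖v (y + t)‖ ^ 2) / 2) := by
      rw [mul_assoc]
      exact mul_le_mul_of_nonneg_left n1 hnn1
    have c2 : ‖Ωₘc‖ * ‖(x + t)⁻¹ • v (x + t)‖ * ‖(y + t)⁻¹ • v (y + t)‖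
        ≤ ‖Ωₘc‖ * ((‖(x + t)⁻¹ • v (x + t)‖ ^ 2 + ‖(y + t)⁻¹ • v (y + t)‖ ^ 2) / 2) := by
      rw [mul_assoc]
      exact mul_le_mul_of_nonneg_left n2 hnn2
    simp only [hφ, Real.norm_eq_abs] at this ⊢
    linarith [this, b1, b2, c1, c2]
  -- decay of f at infinity
  obtain ⟨C, hC⟩ := hbdd
  have hC0 : 0 ≤ C := le_trans (norm_nonneg (v 1)) (hC 1 one_pos)
  have htendf : Tendsto f atTop (nhds 0) := by
    have htend2 : Tendsto (fun t : ℝ => (‖Jc‖ * C / |x - y|) * ‖v (y + t)‖) atTop (nhds 0) := by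
      have h1 : Tendsto (fun t : ℝ => y + t) atTop atTop :=
        tendsto_atTop_add_const_left _ y tendsto_id
      have h2 : Tendsto (fun t : ℝ => ‖v (y + t)‖) atTop (nhds 0) := hdecay.comp h1
      have h3 := h2.const_mul (‖Jc‖ * C / |x - y|)
      simpa only [mul_zero] using h3
    apply squeeze_zero_norm' ?_ htend2
    · filter_upwards [eventually_ge_atTop (0:ℝ)] with t ht
      have hxt : 0 < x + t := by linarith
      have hyt : 0 < y + t := by linarith
      have b1 : |(J.mulVec (v (x + t))) ⬝ᵥ (v (y + t))|
          ≤ ‖Jc‖ * ‖v (x + t)‖ * ‖v (y + t)‖ := by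
        have h := dot_le Jc (v (x + t)) (v (y + t))
        simp only [innerdot', hJc] at h
        exact h
      have b2 : ‖Jc‖ * ‖v (x + t)‖ * ‖v (y + t)‖ ≤ ‖Jc‖ * C * ‖v (y + t)‖ := by
        apply mul_le_mul_of_nonneg_right _ (norm_nonneg _)
        exact mul_le_mul_of_nonneg_left (hC _ hxt) (norm_nonneg _)
      have : ‖f t‖ = |(J.mulVec (v (x + t))) ⬝ᵥ (v (y + t))| / |x - y| := by
        rw [hf]; rw [Real.norm_eq_abs, abs_div]
      rw [this]
      rw [div_le_iff₀ (abs_pos.mpr hsub)]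
      calc |(J.mulVec (v (x + t))) ⬝ᵥ (v (y + t))| ≤ ‖Jc‖ * C * ‖v (y + t)‖ :=
            le_trans b1 b2
        _ = ‖Jc‖ * C / |x - y| * ‖v (y + t)‖ * |x - y| := by
            rw [div_mul_eq_mul_div, div_mul_cancel₀ _ (abs_ne_zero.mpr hsub)]
  -- FTC on (0, ∞)
  have hcont0 : ContinuousWithinAt f (Ici (0:ℝ)) 0 :=
    (hderiv 0 le_rfl).continuousAt.continuousWithinAt
  have hder' : ∀ t ∈ Ioi (0:ℝ), HasDerivAt f (-(g t)) t := fun t ht => hderiv t (le_of_lt ht)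
  have hFTC := integral_Ioi_of_hasDerivAt_of_tendsto hcont0 hder' hgint.neg htendf
  rw [integral_neg] at hFTC
  have hint : ∫ t in Ioi (0:ℝ), g t = f 0 := by linarith [hFTC]
  have hf0 : f 0 = (J.mulVec (v x)) ⬝ᵥ (v y) / (x - y) := by
    rw [hf]; simp
  rw [hint, hf0]
end

section
/- Let n ≥ 1 and let Ω_1, Ω_0, Ω_{−1} be real symmetric 2n×2n matrices with Ω_1 positive semidefinite, −Ω_{−1} positive semidefinite, and rank(Ω_1) + rank(Ω_{−1}) = 1. Let J be the 2n×2n real block matrix [[0, −I_n],[I_n, 0]]. Suppose v : (0,∞) → ℝ^{2n} is differentiable and satisfies v′(x) = J (x Ω_1 + Ω_0 + x^{−1} Ω_{−1}) v(x) for all x > 0, that v is bounded, that ∫_0^∞ ‖v(x)‖² dx < ∞ and ∫_0^∞ ‖v(x)/x‖² dx < ∞, and that ‖v(x)‖ → 0 as x → ∞. Then there exists a measurable function ψ : (0,∞) → ℝ with ∫_0^∞ ψ(x)² dx < ∞ such that for all x, y > 0 with x ≠ y: ⟨J v(x), v(y)⟩/(x−y) = ∫_0^∞ ψ(x+t) ψ(y+t)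 dt. -/
set_option linter.unusedSectionVars false
set_option maxHeartbeats 1000000

open Matrix MeasureTheory Set Filter

section Helpers

variable {ι : Type*} [Fintype ι] [DecidableEq ι]

lemma eucl_norm_sq (u : EuclideanSpace ℝ ι) : ‖u‖ ^ 2 = ∑ i, u i ^ 2 := by
  rw [EuclideanSpace.norm_eq, Real.sq_sqrt (by positivity)]
  simp [sq_abs]

lemma dot_sq_le (w : ι → ℝ) (u : EuclideanSpace ℝ ι) :
    (w ⬝ᵥ (u : ι → ℝ)) ^ 2 ≤ (∑ i, w i ^ 2) * ‖u‖ ^ 2 := by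
  rw [eucl_norm_sq]
  exact Finset.sum_mul_sq_le_sq_mul_sq _ _ _

lemma hasDerivAt_comp_proj {f : ℝ → EuclideanSpace ℝ ι} {f' : EuclideanSpace ℝ ι} {t : ℝ}
    (hf : HasDerivAt f f' t) (i : ι) : HasDerivAt (fun s => f s i) (f' i) t :=
  (EuclideanSpace.proj (𝕜 := ℝ) i).hasFDerivAt.comp_hasDerivAt t hf

lemma hasDerivAt_mulVec_dot (M : Matrix ι ι ℝ) {f g : ℝ → EuclideanSpace ℝ ι}
    {f' g' : EuclideanSpace ℝ ι} {t : ℝ} (hf : HasDerivAt f f' t) (hg : HasDerivAt g g' t) :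
    HasDerivAt (fun s => (M.mulVec (f s)) ⬝ᵥ (g s : ι → ℝ))
      ((M.mulVec (f' : ι → ℝ)) ⬝ᵥ (g t : ι → ℝ) + (M.mulVec (f t)) ⬝ᵥ (g' : ι → ℝ)) t := by
  have h : ∀ i : ι, HasDerivAt (fun s => (∑ j, M i j * f s j) * g s i)
      ((∑ j, M i j * f' j) * g t i + (∑ j, M i j * f t j) * g' i) t := fun i =>
    (HasDerivAt.fun_sum (fun j _ => ((hasDerivAt_comp_proj hf j).const_mul (M i j)))).mul
      (hasDerivAt_comp_proj hg i)
  have H := HasDerivAt.fun_sum (fun i (_ : i ∈ Finset.univ) => h i)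
  have hfun : (fun s => (M.mulVec (f s)) ⬝ᵥ (g s : ι → ℝ)) =
      fun s => ∑ i : ι, (∑ j, M i j * f s j) * g s i := by
    funext s; simp [Matrix.mulVec, dotProduct]
  have hval : (M.mulVec (f' : ι → ℝ)) ⬝ᵥ (g t : ι → ℝ) + (M.mulVec (f t)) ⬝ᵥ (g' : ι → ℝ) =
      ∑ i : ι, ((∑ j, M i j * f' j) * g t i + (∑ j, M i j * f t j) * g' i) := by
    simp [Matrix.mulVec, dotProduct, Finset.sum_add_distrib]
  rw [hfun, hval]; exact H

lemma matrix_rank_zero {M : Matrix ι ι ℝ} (h : M.rank = 0) : M = 0 := by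
  have h0 : LinearMap.range M.mulVecLin = ⊥ := by
    rw [Matrix.rank] at h
    exact Submodule.finrank_eq_zero.mp h
  have h1 : M.mulVecLin = 0 := LinearMap.range_eq_bot.mp h0
  ext i j
  have h2 : M.mulVec (Pi.single j 1) = 0 := by
    rw [← Matrix.mulVecLin_apply, h1]; rfl
  have := congrFun h2 i
  simpa [Matrix.mulVec_single] using this

lemma matrix_rank_neg (M : Matrix ι ι ℝ) : (-M).rank = M.rank := by
  have h : (-M).mulVecLin = -M.mulVecLin := by
    apply LinearMap.ext
    intro x
    simp [Matrix.mulVecLin_apply, Matrix.neg_mulVec]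
  unfold Matrix.rank
  rw [h, LinearMap.range_neg]

lemma psd_rank_one (M : Matrix ι ι ℝ) (hsymm : M.IsSymm) (hpsd : M.PosSemidef)
    (hr : M.rank = 1) : ∃ w : ι → ℝ, M = vecMulVec w w := by
  classical
  have hfin : Module.finrank ℝ (LinearMap.range M.mulVecLin) = 1 := hr
  obtain ⟨u', hu0, hspan⟩ := finrank_eq_one_iff'.mp hfin
  set u : ι → ℝ := (u' : ι → ℝ) with hu
  have hune : u ≠ 0 := fun h => hu0 (Subtype.ext h)
  have hcol : ∀ j, ∃ c : ℝ, ∀ i, M i j = c * u i := by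
    intro j
    obtain ⟨c, hc⟩ := hspan ⟨M.mulVec (Pi.single j 1), LinearMap.mem_range_self _ _⟩
    refine ⟨c, fun i => ?_⟩
    have h2 := congrFun (congrArg Subtype.val hc) i
    simpa [Matrix.mulVec_single, mul_comm] using h2.symm
  choose c hc using hcol
  obtain ⟨i₀, hi₀⟩ : ∃ i₀, u i₀ ≠ 0 := by
    by_contra h
    push_neg at h
    exact hune (funext h)
  have hMsym : ∀ i j, M i j = M j i := fun i j => by
    have := congrFun (congrFun hsymm j) i
    simpa [Matrix.transpose_apply] using this
  set a : ℝ := c i₀ / u i₀ with ha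
  have hMa : ∀ i j, M i j = a * u i * u j := by
    intro i j
    have h1 : c j * u i₀ = c i₀ * u j := by
      rw [← hc j i₀, hMsym i₀ j, hc i₀ j]
    have h2 : c j = a * u j := by
      rw [ha, div_mul_eq_mul_div, eq_div_iff hi₀]
      linarith [h1]
    rw [hc j i, h2]; ring
  have hS : 0 < ∑ i, u i ^ 2 := by
    have h1 : ∀ i ∈ Finset.univ, (0:ℝ) ≤ u i ^ 2 := fun i _ => sq_nonneg _
    exact Finset.sum_pos' h1 ⟨i₀, Finset.mem_univ _, by positivity⟩
  have hquad : 0 ≤ a * (∑ i, u i ^ 2) ^ 2 := by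
    have h0 := hpsd.dotProduct_mulVec_nonneg u
    have h1 : (star u) ⬝ᵥ (M.mulVec u) = a * (∑ i, u i ^ 2) ^ 2 := by
      simp only [star_trivial, Matrix.mulVec, dotProduct, hMa]
      rw [sq, Finset.sum_mul_sum, Finset.mul_sum]
      congr 1; funext i
      rw [Finset.mul_sum, Finset.mul_sum]
      congr 1; funext j
      ring
    rw [h1] at h0
    exact_mod_cast h0
  have hanneg : 0 ≤ a := by
    by_contra h
    push_neg at h
    nlinarith [pow_pos hS 2]
  refine ⟨fun i => Real.sqrt a * u i, ?_⟩
  ext i j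
  rw [Matrix.vecMulVec_apply, hMa i j]
  have hsq : Real.sqrt a * Real.sqrt a = a := Real.mul_self_sqrt hanneg
  calc a * u i * u j = (Real.sqrt a * Real.sqrt a) * u i * u j := by rw [hsq]
    _ = (Real.sqrt a * u i) * (Real.sqrt a * u j) := by ring

lemma deriv_dot_eq (J A B : Matrix ι ι ℝ) (hJJ : J * J = -1) (hJTJ : Jᵀ * J = 1)
    (hB : B.IsSymm) (u u' : ι → ℝ) :
    (J.mulVec (J.mulVec (A.mulVec u))) ⬝ᵥ u' + (J.mulVec u) ⬝ᵥ (J.mulVec (B.mulVec u'))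
      = (B.mulVec u) ⬝ᵥ u' - (A.mulVec u) ⬝ᵥ u' := by
  have h1 : J.mulVec (J.mulVec (A.mulVec u)) = -(A.mulVec u) := by
    rw [Matrix.mulVec_mulVec, hJJ, Matrix.neg_mulVec, Matrix.one_mulVec]
  have h2 : (J.mulVec u) ⬝ᵥ (J.mulVec (B.mulVec u')) = (B.mulVec u) ⬝ᵥ u' := by
    rw [Matrix.dotProduct_mulVec, ← Matrix.mulVec_transpose, Matrix.mulVec_mulVec, hJTJ,
      Matrix.one_mulVec, Matrix.dotProduct_mulVec, ← Matrix.mulVec_transpose, hB]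
  rw [h1, h2, neg_dotProduct]
  ring

lemma vecMulVec_mulVec_dot (w u u' : ι → ℝ) :
    ((vecMulVec w w).mulVec u) ⬝ᵥ u' = (w ⬝ᵥ u) * (w ⬝ᵥ u') := by
  simp only [Matrix.mulVec, dotProduct, vecMulVec_apply]
  rw [Finset.sum_mul_sum, Finset.sum_comm]
  congr 1; funext i
  rw [Finset.sum_mul]
  congr 1; funext j
  ring

lemma integrableOn_shift' {f : ℝ → ℝ} (hf : IntegrableOn f (Ioi (0:ℝ))) {a : ℝ} (ha : 0 < a) :
    IntegrableOn (fun t => f (a + t)) (Ioi (0:ℝ)) := by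
  have h1 : IntegrableOn f (Ioi a) := hf.mono_set (Ioi_subset_Ioi ha.le)
  have hemb : MeasurableEmbedding (fun t : ℝ => a + t) :=
    (MeasurableEquiv.addLeft a).measurableEmbedding
  have hmp : MeasurePreserving (fun t : ℝ => a + t) volume volume :=
    measurePreserving_add_left volume a
  have h2 := (hmp.integrableOn_comp_preimage hemb (f := f) (s := Ioi a)).mpr h1
  have h3 : (fun t : ℝ => a + t) ⁻¹' (Ioi a) = Ioi 0 := by ext t; simp
  rwa [h3] at h2

lemma core (J : Matrix ι ι ℝ) (v : ℝ → EuclideanSpace ℝ ι)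
    (hJdot : ∀ u u' : EuclideanSpace ℝ ι, |(J.mulVec u) ⬝ᵥ (u' : ι → ℝ)| ≤ ‖u‖ * ‖u'‖)
    (hdecay : Tendsto (fun x => ‖v x‖) atTop (nhds 0))
    (ψ₀ : ℝ → ℝ) (hψcont : ContinuousOn ψ₀ (Ioi 0))
    (hψL2 : IntegrableOn (fun s => ψ₀ s ^ 2) (Ioi (0:ℝ)))
    (hder : ∀ x y : ℝ, 0 < x → 0 < y → ∀ t : ℝ, 0 ≤ t →
      HasDerivAt (fun s => (J.mulVec (v (x + s))) ⬝ᵥ (v (y + s) : ι → ℝ))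
        ((y - x) * (ψ₀ (x + t) * ψ₀ (y + t))) t) :
    ∃ ψ : ℝ → ℝ, Measurable ψ ∧ IntegrableOn (fun s => ψ s ^ 2) (Ioi (0:ℝ)) ∧
      ∀ x y : ℝ, 0 < x → 0 < y → x ≠ y →
        (J.mulVec (v x)) ⬝ᵥ (v y : ι → ℝ) / (x - y) =
          ∫ t in Ioi (0:ℝ), ψ (x + t) * ψ (y + t) := by
  classical
  set ψ : ℝ → ℝ := (Ioi (0:ℝ)).piecewise ψ₀ (fun _ => 0) with hψdef
  have hψmeas : Measurable ψ :=
    hψcont.measurable_piecewise continuousOn_const measurableSet_Ioi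
  have hψeq : ∀ s : ℝ, 0 < s → ψ s = ψ₀ s := fun s hs => piecewise_eq_of_mem _ _ _ hs
  have hψsq : IntegrableOn (fun s => ψ s ^ 2) (Ioi (0:ℝ)) := by
    refine hψL2.congr_fun (fun s hs => ?_) measurableSet_Ioi
    rw [hψeq s hs]
  refine ⟨ψ, hψmeas, hψsq, ?_⟩
  intro x y hx hy hxy
  have hsh : ∀ a : ℝ, 0 < a → IntegrableOn (fun t => ψ (a + t) ^ 2) (Ioi (0:ℝ)) :=
    fun a ha => integrableOn_shift' hψsq ha
  have habs : ∀ a b : ℝ, |a * b| ≤ a ^ 2 + b ^ 2 := by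
    intro a b
    rw [abs_mul]
    nlinarith [sq_nonneg (|a| - |b|), abs_nonneg a, abs_nonneg b, sq_abs a, sq_abs b]
  have hKmeas : Measurable fun t => ψ (x + t) * ψ (y + t) :=
    (hψmeas.comp (measurable_id.const_add x)).mul (hψmeas.comp (measurable_id.const_add y))
  have hKint : IntegrableOn (fun t => ψ (x + t) * ψ (y + t)) (Ioi (0:ℝ)) := by
    refine Integrable.mono' ((hsh x hx).add (hsh y hy)) hKmeas.aestronglyMeasurable ?_
    refine Filter.Eventually.of_forall fun t => ?_
    rw [Real.norm_eq_abs]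
    exact habs (ψ (x + t)) (ψ (y + t))
  have hK₀int : IntegrableOn (fun t => (y - x) * (ψ₀ (x + t) * ψ₀ (y + t))) (Ioi (0:ℝ)) := by
    refine IntegrableOn.congr_fun (hKint.const_mul (y - x)) (fun t ht => ?_) measurableSet_Ioi
    have ht' : (0:ℝ) < t := ht
    rw [hψeq (x + t) (by linarith), hψeq (y + t) (by linarith)]
  have hg0 : Tendsto (fun t => (J.mulVec (v (x + t))) ⬝ᵥ (v (y + t) : ι → ℝ))
      atTop (nhds 0) := by
    have h1 : Tendsto (fun t : ℝ => ‖v (x + t)‖) atTop (nhds 0) :=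
      hdecay.comp (tendsto_atTop_add_const_left atTop x tendsto_id)
    have h2 : Tendsto (fun t : ℝ => ‖v (y + t)‖) atTop (nhds 0) :=
      hdecay.comp (tendsto_atTop_add_const_left atTop y tendsto_id)
    have h3 : Tendsto (fun t : ℝ => ‖v (x + t)‖ * ‖v (y + t)‖) atTop (nhds 0) := by
      simpa using h1.mul h2
    exact squeeze_zero_norm (fun t => hJdot (v (x + t)) (v (y + t))) h3
  have hFTC := integral_Ioi_of_hasDerivAt_of_tendsto'
    (f := fun s => (J.mulVec (v (x + s))) ⬝ᵥ (v (y + s) : ι → ℝ))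
    (f' := fun t => (y - x) * (ψ₀ (x + t) * ψ₀ (y + t)))
    (fun t ht => hder x y hx hy t ht) hK₀int hg0
  have h1 : ∫ t in Ioi (0:ℝ), (y - x) * (ψ₀ (x + t) * ψ₀ (y + t)) =
      (y - x) * ∫ t in Ioi (0:ℝ), ψ₀ (x + t) * ψ₀ (y + t) := integral_const_mul _ _
  have h2 : ∫ t in Ioi (0:ℝ), ψ₀ (x + t) * ψ₀ (y + t) =
      ∫ t in Ioi (0:ℝ), ψ (x + t) * ψ (y + t) := by
    refine setIntegral_congr_fun measurableSet_Ioi (fun t ht => ?_)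
    have ht' : (0:ℝ) < t := ht
    rw [hψeq (x + t) (by linarith), hψeq (y + t) (by linarith)]
  rw [h1, h2] at hFTC
  simp only [add_zero, zero_sub] at hFTC
  have hxy' : x - y ≠ 0 := sub_ne_zero.mpr hxy
  rw [div_eq_iff hxy']
  linarith [hFTC]

end Helpers

section Jsection

variable {n : ℕ}

lemma Jfacts (J : Matrix (Fin n ⊕ Fin n) (Fin n ⊕ Fin n) ℝ)
    (hJ : J = Matrix.fromBlocks 0 (-1) 1 0) :
    J * J = -1 ∧ Jᵀ * J = 1 ∧
    (∀ u : Fin n ⊕ Fin n → ℝ, J.mulVec u =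
      Sum.elim (fun i => -u (Sum.inr i)) (fun i => u (Sum.inl i))) := by
  subst hJ
  refine ⟨?_, ?_, ?_⟩
  · rw [Matrix.fromBlocks_multiply]
    simp
    rw [← Matrix.fromBlocks_one, Matrix.fromBlocks_neg]
    simp
  · rw [Matrix.fromBlocks_transpose, Matrix.fromBlocks_multiply]
    simp [← Matrix.fromBlocks_one]
  · intro u
    funext k
    cases k with
    | inl i =>
      simp [Matrix.mulVec, dotProduct, Fintype.sum_sum_type, Matrix.one_apply]
    | inr i =>
      simp [Matrix.mulVec, dotProduct, Fintype.sum_sum_type, Matrix.one_apply]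

lemma Jdot (J : Matrix (Fin n ⊕ Fin n) (Fin n ⊕ Fin n) ℝ)
    (hJ : J = Matrix.fromBlocks 0 (-1) 1 0)
    (u u' : EuclideanSpace ℝ (Fin n ⊕ Fin n)) :
    |(J.mulVec u) ⬝ᵥ (u' : Fin n ⊕ Fin n → ℝ)| ≤ ‖u‖ * ‖u'‖ := by
  obtain ⟨-, -, hmul⟩ := Jfacts J hJ
  have hsum : ∑ i, (J.mulVec u i) ^ 2 = ∑ i, (u i) ^ 2 := by
    rw [hmul u, Fintype.sum_sum_type, Fintype.sum_sum_type]
    simp [add_comm]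
  have h2 : ((J.mulVec u) ⬝ᵥ (u' : Fin n ⊕ Fin n → ℝ)) ^ 2 ≤ (‖u‖ * ‖u'‖) ^ 2 := by
    rw [mul_pow, eucl_norm_sq, eucl_norm_sq, ← hsum]
    exact Finset.sum_mul_sq_le_sq_mul_sq _ _ _
  calc |(J.mulVec u) ⬝ᵥ (u' : Fin n ⊕ Fin n → ℝ)|
      = Real.sqrt (((J.mulVec u) ⬝ᵥ (u' : Fin n ⊕ Fin n → ℝ)) ^ 2) :=
        (Real.sqrt_sq_eq_abs _).symm
    _ ≤ Real.sqrt ((‖u‖ * ‖u'‖) ^ 2) := Real.sqrt_le_sqrt h2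
    _ = ‖u‖ * ‖u'‖ := Real.sqrt_sq (by positivity)

end Jsection

/-- Factorization of the integrable kernel `⟨J v(x), v(y)⟩/(x−y)` arising
from the differential equation `v′(x) = J(xΩ₁ + Ω₀ + x⁻¹Ω₋₁)v(x)` with `Ω₁ ⪰ 0`,
`−Ω₋₁ ⪰ 0` and `rank Ω₁ + rank Ω₋₁ = 1`, as the square `Γ_ψ²` of a scalar Hankel
operator. -/
theorem integrable_kernel_hankel_square
    (n : ℕ) (hn : 1 ≤ n)
    (Ω₁ Ω₀ Ωₘ : Matrix (Fin n ⊕ Fin n) (Fin n ⊕ Fin n) ℝ)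
    (hΩ₁symm : Ω₁.IsSymm) (hΩ₀symm : Ω₀.IsSymm) (hΩₘsymm : Ωₘ.IsSymm)
    (hΩ₁pos : Ω₁.PosSemidef) (hΩₘneg : (-Ωₘ).PosSemidef)
    (hrank : Ω₁.rank + Ωₘ.rank = 1)
    (J : Matrix (Fin n ⊕ Fin n) (Fin n ⊕ Fin n) ℝ)
    (hJ : J = Matrix.fromBlocks 0 (-1) 1 0)
    (v : ℝ → EuclideanSpace ℝ (Fin n ⊕ Fin n))
    (hode : ∀ x : ℝ, 0 < x →
      HasDerivAt v (WithLp.toLp 2 (J.mulVec ((x • Ω₁ + Ω₀ + x⁻¹ • Ωₘ).mulVec (v x)))) x)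
    (hbdd : ∃ C : ℝ, ∀ x : ℝ, 0 < x → ‖v x‖ ≤ C)
    (hL2 : IntegrableOn (fun x => ‖v x‖ ^ 2) (Ioi (0 : ℝ)))
    (hL2' : IntegrableOn (fun x => ‖(x : ℝ)⁻¹ • v x‖ ^ 2) (Ioi (0 : ℝ)))
    (hdecay : Tendsto (fun x => ‖v x‖) atTop (nhds 0)) :
    ∃ ψ : ℝ → ℝ, Measurable ψ ∧ IntegrableOn (fun x => ψ x ^ 2) (Ioi (0 : ℝ)) ∧
      ∀ x y : ℝ, 0 < x → 0 < y → x ≠ y →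
        (J.mulVec (v x)) ⬝ᵥ (v y) / (x - y) =
          ∫ t in Ioi (0 : ℝ), ψ (x + t) * ψ (y + t) := by
  classical
  obtain ⟨hJJ, hJTJ, -⟩ := Jfacts J hJ
  have hJdot := Jdot J hJ
  have hvcont : ContinuousOn v (Ioi 0) :=
    fun s hs => ((hode s hs).continuousAt).continuousWithinAt
  -- shifted derivative
  have hvd : ∀ a t : ℝ, 0 < a → 0 ≤ t →
      HasDerivAt (fun s => v (a + s))
        (WithLp.toLp 2 (J.mulVec (((a + t) • Ω₁ + Ω₀ + (a + t)⁻¹ • Ωₘ).mulVec (v (a + t))))) t := by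
    intro a t ha ht
    have h0 : HasDerivAt (fun s : ℝ => a + s) 1 t := (hasDerivAt_id t).const_add a
    have h1 := (hode (a + t) (by positivity)).scomp t h0
    rw [one_smul] at h1; exact h1
  -- symmetry of the coefficient matrix
  have hsymB : ∀ c d : ℝ, (c • Ω₁ + Ω₀ + d • Ωₘ).IsSymm := by
    intro c d
    unfold Matrix.IsSymm
    simp [Matrix.transpose_add, Matrix.transpose_smul, hΩ₁symm.eq, hΩ₀symm.eq, hΩₘsymm.eq]
  have hcases : (Ω₁.rank = 1 ∧ Ωₘ.rank = 0) ∨ (Ω₁.rank = 0 ∧ Ωₘ.rank = 1) := by omega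
  rcases hcases with ⟨h1, h2⟩ | ⟨h1, h2⟩
  · -- Case A : Ωₘ = 0, Ω₁ = w wᵀ
    have hΩₘ0 : Ωₘ = 0 := matrix_rank_zero h2
    obtain ⟨w, hw⟩ := psd_rank_one Ω₁ hΩ₁symm hΩ₁pos h1
    set ψ₀ : ℝ → ℝ := fun s => w ⬝ᵥ (v s : Fin n ⊕ Fin n → ℝ) with hψ₀def
    have hψcont : ContinuousOn ψ₀ (Ioi 0) := by
      have : ContinuousOn (fun s => ∑ i, w i * v s i) (Ioi 0) :=
        continuousOn_finset_sum _ (fun i _ =>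
          continuousOn_const.mul
            ((EuclideanSpace.proj (𝕜 := ℝ) i).continuous.comp_continuousOn hvcont))
      exact this
    have hψL2 : IntegrableOn (fun s => ψ₀ s ^ 2) (Ioi (0:ℝ)) := by
      refine Integrable.mono' (hL2.const_mul (∑ i, w i ^ 2))
        ((hψcont.pow 2).aestronglyMeasurable measurableSet_Ioi) ?_
      refine (ae_restrict_iff' measurableSet_Ioi).mpr (Filter.Eventually.of_forall fun s _ => ?_)
      rw [Real.norm_eq_abs, abs_of_nonneg (sq_nonneg _)]
      exact dot_sq_le w (v s)
    have hder : ∀ x y : ℝ, 0 < x → 0 < y → ∀ t : ℝ, 0 ≤ t →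
        HasDerivAt (fun s => (J.mulVec (v (x + s))) ⬝ᵥ (v (y + s) : Fin n ⊕ Fin n → ℝ))
          ((y - x) * (ψ₀ (x + t) * ψ₀ (y + t))) t := by
      intro x y hx hy t ht
      have HD := hasDerivAt_mulVec_dot J (hvd x t hx ht) (hvd y t hy ht)
      simp only [WithLp.ofLp_toLp] at HD
      convert HD using 1
      rw [deriv_dot_eq J ((x + t) • Ω₁ + Ω₀ + (x + t)⁻¹ • Ωₘ)
        ((y + t) • Ω₁ + Ω₀ + (y + t)⁻¹ • Ωₘ) hJJ hJTJ (hsymB _ _)]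
      simp only [hΩₘ0, smul_zero, add_zero, Matrix.add_mulVec, Matrix.smul_mulVec,
        add_dotProduct, smul_dotProduct, smul_eq_mul, hw,
        vecMulVec_mulVec_dot, hψ₀def]
      ring
    obtain ⟨ψ, hm, hi, hk⟩ := core J v hJdot hdecay ψ₀ hψcont hψL2 hder
    exact ⟨ψ, hm, hi, hk⟩
  · -- Case B : Ω₁ = 0, -Ωₘ = w wᵀ
    have hΩ₁0 : Ω₁ = 0 := matrix_rank_zero h1
    have hnegrank : (-Ωₘ).rank = 1 := by rw [matrix_rank_neg]; exact h2
    have hnegsymm : (-Ωₘ).IsSymm := by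
      unfold Matrix.IsSymm
      simp [hΩₘsymm.eq]
    obtain ⟨w, hw⟩ := psd_rank_one (-Ωₘ) hnegsymm hΩₘneg hnegrank
    have hΩₘ : Ωₘ = -(vecMulVec w w) := by rw [← hw]; simp
    set ψ₀ : ℝ → ℝ := fun s => s⁻¹ * (w ⬝ᵥ (v s : Fin n ⊕ Fin n → ℝ)) with hψ₀def
    have hdotcont : ContinuousOn (fun s => w ⬝ᵥ (v s : Fin n ⊕ Fin n → ℝ)) (Ioi 0) := by
      have : ContinuousOn (fun s => ∑ i, w i * v s i) (Ioi 0) :=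
        continuousOn_finset_sum _ (fun i _ =>
          continuousOn_const.mul
            ((EuclideanSpace.proj (𝕜 := ℝ) i).continuous.comp_continuousOn hvcont))
      exact this
    have hψcont : ContinuousOn ψ₀ (Ioi 0) :=
      (continuousOn_id.inv₀ (fun s hs => ne_of_gt hs)).mul hdotcont
    have hψval : ∀ s : ℝ, ψ₀ s = w ⬝ᵥ (((s⁻¹ • v s : EuclideanSpace ℝ (Fin n ⊕ Fin n))) :
        Fin n ⊕ Fin n → ℝ) := by
      intro s
      simp only [hψ₀def, dotProduct, PiLp.smul_apply, smul_eq_mul, Finset.mul_sum]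
      congr 1; funext i; ring
    have hψL2 : IntegrableOn (fun s => ψ₀ s ^ 2) (Ioi (0:ℝ)) := by
      refine Integrable.mono' (hL2'.const_mul (∑ i, w i ^ 2))
        ((hψcont.pow 2).aestronglyMeasurable measurableSet_Ioi) ?_
      refine (ae_restrict_iff' measurableSet_Ioi).mpr (Filter.Eventually.of_forall fun s _ => ?_)
      rw [Real.norm_eq_abs, abs_of_nonneg (sq_nonneg _), hψval s]
      exact dot_sq_le w (s⁻¹ • v s)
    have hder : ∀ x y : ℝ, 0 < x → 0 < y → ∀ t : ℝ, 0 ≤ t →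
        HasDerivAt (fun s => (J.mulVec (v (x + s))) ⬝ᵥ (v (y + s) : Fin n ⊕ Fin n → ℝ))
          ((y - x) * (ψ₀ (x + t) * ψ₀ (y + t))) t := by
      intro x y hx hy t ht
      have HD := hasDerivAt_mulVec_dot J (hvd x t hx ht) (hvd y t hy ht)
      simp only [WithLp.ofLp_toLp] at HD
      convert HD using 1
      rw [deriv_dot_eq J ((x + t) • Ω₁ + Ω₀ + (x + t)⁻¹ • Ωₘ)
        ((y + t) • Ω₁ + Ω₀ + (y + t)⁻¹ • Ωₘ) hJJ hJTJ (hsymB _ _)]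
      have hxt : (x + t) ≠ 0 := by positivity
      have hyt : (y + t) ≠ 0 := by positivity
      simp only [hΩ₁0, smul_zero, zero_add, Matrix.add_mulVec, Matrix.smul_mulVec,
        add_dotProduct, smul_dotProduct, smul_eq_mul, hΩₘ,
        Matrix.neg_mulVec, neg_dotProduct, vecMulVec_mulVec_dot, hψ₀def]
      field_simp
      ring
    obtain ⟨ψ, hm, hi, hk⟩ := core J v hJdot hdecay ψ₀ hψcont hψL2 hder
    exact ⟨ψ, hm, hi, hk⟩
end

section
/- Let n ≥ 1 and let Ω_1, Ω_0, Ω_{−1} be real symmetric 2n×2n matrices, and let J be the 2n×2n real block matrix [[0, −I_n],[I_n, 0]]. Suppose v : (0,∞) → ℝ^{2n} is differentiable and satisfies v′(x) = J (x Ω_1 + Ω_0 + x^{−1} Ω_{−1}) v(x) for all x > 0. Define W(x,y) = ⟨J v(x), v(y)⟩/(x−y) for x,y > 0 with x ≠ y. Then for all such x, y the derivative d/ds W(x+s, y+s) at s = 0 exists and equals −⟨Ω_1 v(x), v(y)⟩ + (1/(xy)) ⟨Ω_{−1} v(x), v(y)⟩. -/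
open Matrix

private lemma hasDerivAt_dot {ι : Type*} [Fintype ι] {f g : ℝ → ι → ℝ} {f' g' : ι → ℝ} {t : ℝ}
    (hf : HasDerivAt f f' t) (hg : HasDerivAt g g' t) :
    HasDerivAt (fun s => f s ⬝ᵥ g s) (f' ⬝ᵥ g t + f t ⬝ᵥ g') t := by
  have hfc := hasDerivAt_pi.1 hf
  have hgc := hasDerivAt_pi.1 hg
  have h := HasDerivAt.fun_sum (u := Finset.univ)
    (fun i _ => (hfc i).mul (hgc i))
  simpa [dotProduct, Finset.sum_add_distrib] using h

private lemma hasDerivAt_mulVecc {ι : Type*} [Fintype ι] (M : Matrix ι ι ℝ)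
    {f : ℝ → ι → ℝ} {f' : ι → ℝ} {t : ℝ} (hf : HasDerivAt f f' t) :
    HasDerivAt (fun s => M.mulVec (f s)) (M.mulVec f') t := by
  rw [hasDerivAt_pi] at hf ⊢
  intro i
  have h := HasDerivAt.fun_sum (u := Finset.univ) (fun j _ => (hf j).const_mul (M i j))
  simpa [mulVec, dotProduct] using h

/-- For `v` solving `v′(x) = J(xΩ₁ + Ω₀ + x⁻¹Ω₋₁)v(x)` on `(0,∞)`, the
kernel `W(x,y) = ⟨J v(x), v(y)⟩/(x−y)` satisfies
`(∂/∂x + ∂/∂y)W(x,y) = −⟨Ω₁v(x),v(y)⟩ + (1/(xy))⟨Ω₋₁v(x),v(y)⟩`. -/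
theorem diagonal_derivative_of_integrable_kernel
    (n : ℕ) (hn : 1 ≤ n)
    (Ω₁ Ω₀ Ωₘ : Matrix (Fin n ⊕ Fin n) (Fin n ⊕ Fin n) ℝ)
    (hΩ₁symm : Ω₁.IsSymm) (hΩ₀symm : Ω₀.IsSymm) (hΩₘsymm : Ωₘ.IsSymm)
    (J : Matrix (Fin n ⊕ Fin n) (Fin n ⊕ Fin n) ℝ)
    (hJ : J = Matrix.fromBlocks 0 (-1) 1 0)
    (v : ℝ → (Fin n ⊕ Fin n → ℝ))
    (hode : ∀ x : ℝ, 0 < x →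
      HasDerivAt v (J.mulVec ((x • Ω₁ + Ω₀ + x⁻¹ • Ωₘ).mulVec (v x))) x)
    (W : ℝ → ℝ → ℝ)
    (hW : ∀ x y : ℝ, x ≠ y → W x y = (J.mulVec (v x)) ⬝ᵥ (v y) / (x - y)) :
    ∀ x y : ℝ, 0 < x → 0 < y → x ≠ y →
      HasDerivAt (fun s => W (x + s) (y + s))
        (-((Ω₁.mulVec (v x)) ⬝ᵥ (v y)) + (1 / (x * y)) * ((Ωₘ.mulVec (v x)) ⬝ᵥ (v y)))
        0 := by
  intro x y hx hy hxy
  have hJ2 : J * J = -1 := by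
    subst hJ
    simp [Matrix.fromBlocks_multiply, ← Matrix.fromBlocks_one]
    ext i j
    rcases i with i | i <;> rcases j with j | j <;>
      simp [Matrix.fromBlocks, Matrix.one_apply]
  have hJT : Jᵀ = -J := by
    subst hJ
    ext i j
    rcases i with i | i <;> rcases j with j | j <;>
      simp [Matrix.fromBlocks, Matrix.one_apply, eq_comm]
  set Ax : Matrix (Fin n ⊕ Fin n) (Fin n ⊕ Fin n) ℝ := x • Ω₁ + Ω₀ + x⁻¹ • Ωₘ with hAx
  set Ay : Matrix (Fin n ⊕ Fin n) (Fin n ⊕ Fin n) ℝ := y • Ω₁ + Ω₀ + y⁻¹ • Ωₘ with hAy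
  -- derivative of s ↦ v (x + s) at 0
  have hadd : ∀ c : ℝ, HasDerivAt (fun s : ℝ => c + s) 1 0 := fun c =>
    (hasDerivAt_id 0).const_add c
  have hux : HasDerivAt (fun s => v (x + s)) (J.mulVec (Ax.mulVec (v x))) 0 := by
    have := (hode x hx).scomp_of_eq 0 (hadd x) (by norm_num)
    simp only [one_smul] at this; exact this
  have huy : HasDerivAt (fun s => v (y + s)) (J.mulVec (Ay.mulVec (v y))) 0 := by
    have := (hode y hy).scomp_of_eq 0 (hadd y) (by norm_num)
    simp only [one_smul] at this; exact this
  -- numerator derivative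
  have hN : HasDerivAt (fun s => (J.mulVec (v (x + s))) ⬝ᵥ (v (y + s)))
      ((J.mulVec (J.mulVec (Ax.mulVec (v x)))) ⬝ᵥ (v (y + 0)) +
        (J.mulVec (v (x + 0))) ⬝ᵥ (J.mulVec (Ay.mulVec (v y)))) 0 :=
    hasDerivAt_dot (hasDerivAt_mulVecc J hux) huy
  simp only [add_zero] at hN
  -- simplify the derivative value
  have e1 : (J.mulVec (J.mulVec (Ax.mulVec (v x)))) ⬝ᵥ (v y)
      = -((Ax.mulVec (v x)) ⬝ᵥ (v y)) := by
    rw [Matrix.mulVec_mulVec, hJ2]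
    simp [Matrix.neg_mulVec]
  have e2 : (J.mulVec (v x)) ⬝ᵥ (J.mulVec (Ay.mulVec (v y)))
      = (Ay.mulVec (v x)) ⬝ᵥ (v y) := by
    rw [Matrix.dotProduct_mulVec, ← Matrix.mulVec_transpose, Matrix.mulVec_mulVec, hJT]
    have : -J * J = (1 : Matrix (Fin n ⊕ Fin n) (Fin n ⊕ Fin n) ℝ) := by
      rw [Matrix.neg_mul, hJ2]; simp
    rw [this, Matrix.one_mulVec, Matrix.dotProduct_mulVec, ← Matrix.mulVec_transpose]
    have hsymm : Ayᵀ = Ay := by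
      simp only [hAy, Matrix.transpose_add, Matrix.transpose_smul,
        hΩ₁symm.eq, hΩ₀symm.eq, hΩₘsymm.eq]
    rw [hsymm]
  rw [e1, e2] at hN
  -- rewrite W along the diagonal
  have heq : (fun s => W (x + s) (y + s))
      = fun s => ((J.mulVec (v (x + s))) ⬝ᵥ (v (y + s))) / (x - y) := by
    funext s
    rw [hW (x + s) (y + s) (by intro h; exact hxy (by linarith))]
    ring_nf
  rw [heq]
  have := hN.div_const (x - y)
  refine this.congr_deriv ?_
  have hAyx : Ay - Ax = (y - x) • Ω₁ + (y⁻¹ - x⁻¹) • Ωₘ := by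
    simp only [hAx, hAy]
    module
  have expand : -((Ax.mulVec (v x)) ⬝ᵥ (v y)) + (Ay.mulVec (v x)) ⬝ᵥ (v y)
      = (y - x) * ((Ω₁.mulVec (v x)) ⬝ᵥ (v y)) + (y⁻¹ - x⁻¹) * ((Ωₘ.mulVec (v x)) ⬝ᵥ (v y)) := by
    have : -((Ax.mulVec (v x)) ⬝ᵥ (v y)) + (Ay.mulVec (v x)) ⬝ᵥ (v y)
        = ((Ay - Ax).mulVec (v x)) ⬝ᵥ (v y) := by
      rw [Matrix.sub_mulVec, sub_dotProduct]; ring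
    rw [this, hAyx, Matrix.add_mulVec, add_dotProduct,
      Matrix.smul_mulVec, Matrix.smul_mulVec,
      smul_dotProduct, smul_dotProduct]
    simp [smul_eq_mul]
  rw [expand]
  have hx0 : x ≠ 0 := ne_of_gt hx
  have hy0 : y ≠ 0 := ne_of_gt hy
  have hxy0 : x - y ≠ 0 := sub_ne_zero.2 hxy
  field_simp
  ring
end

section
/- Let n be a nonnegative integer and define u : (0,∞) → ℝ by u(x) = x e^{−x/2} L_n^{(1)}(x), where L_n^{(1)}(x) = (x^{−1} e^{x}/n!) · dⁿ/dxⁿ ( x^{n+1} e^{−x} ). Then for all x, y > 0 with x ≠ y: ( u(x) u′(y) − u′(x) u(y) )/(x−y) = (n+1) ∫_0^∞ u(x+t) u(y+t) / ( (x+t)(y+t) ) dt. -/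
open Real MeasureTheory Set

open Polynomial Filter Topology in
/-- The Rodrigues polynomials: `lagP n m = e^t D^m (t^{n+1} e^{-t})`. -/
noncomputable def lagP (n : ℕ) : ℕ → Polynomial ℝ
  | 0 => Polynomial.X ^ (n + 1)
  | (m + 1) => Polynomial.derivative (lagP n m) - lagP n m

/-- half-exponential weighted polynomial function -/
noncomputable def lagV (r : Polynomial ℝ) (s : ℝ) : ℝ := Real.exp (-s / 2) * r.eval s

/-- the effect of `d/ds` on `lagV` at the polynomial level -/
noncomputable def dh (r : Polynomial ℝ) : Polynomial ℝ :=
  Polynomial.derivative r - Polynomial.C (2⁻¹ : ℝ) * r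

lemma lagP_iteratedDeriv (n m : ℕ) (t : ℝ) :
    iteratedDeriv m (fun t : ℝ => t ^ (n + 1) * Real.exp (-t)) t
      = (lagP n m).eval t * Real.exp (-t) := by
  induction m generalizing t with
  | zero => simp [lagP]
  | succ m ih =>
    rw [iteratedDeriv_succ]
    have h : iteratedDeriv m (fun t : ℝ => t ^ (n + 1) * Real.exp (-t))
        = fun t => (lagP n m).eval t * Real.exp (-t) := funext ih
    rw [h]
    have hd : HasDerivAt (fun t : ℝ => (lagP n m).eval t * Real.exp (-t))
        ((Polynomial.derivative (lagP n m)).eval t * Real.exp (-t)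
          + (lagP n m).eval t * (Real.exp (-t) * (-1))) t :=
      ((lagP n m).hasDerivAt t).mul ((hasDerivAt_neg t).exp)
    rw [hd.deriv]
    show _ = (Polynomial.derivative (lagP n m) - lagP n m).eval t * Real.exp (-t)
    simp
    ring

lemma lagP_deriv_rec (n : ℕ) : ∀ m : ℕ,
    Polynomial.X * Polynomial.derivative (lagP n m)
      = (((n : Polynomial ℝ)) + 1 - (m : Polynomial ℝ)) * lagP n m
        - (m : Polynomial ℝ) * lagP n (m - 1) := by
  intro m
  induction m with
  | zero =>
    show Polynomial.X * Polynomial.derivative (Polynomial.X ^ (n + 1)) = _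
    rw [Polynomial.derivative_X_pow]
    push_cast
    simp [lagP]
    ring
  | succ m ih =>
    have hd := congrArg Polynomial.derivative ih
    simp only [Polynomial.derivative_mul, Polynomial.derivative_X, Polynomial.derivative_sub,
      Polynomial.derivative_natCast, Polynomial.derivative_one, one_mul, zero_mul, sub_zero,
      zero_sub, zero_add, zero_mul, neg_zero, add_zero] at hd
    have hps : lagP n (m + 1) = Polynomial.derivative (lagP n m) - lagP n m := rfl
    rw [hps, Polynomial.derivative_sub]
    cases m with
    | zero =>
      simp only [Nat.zero_sub, Nat.cast_zero, zero_mul, sub_zero, Nat.cast_ofNat,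
        Nat.cast_one, Nat.cast_zero] at ih hd ⊢
      push_cast
      simp only [Polynomial.derivative_add, Polynomial.derivative_natCast,
        Polynomial.derivative_one, add_zero, zero_add, zero_mul] at hd
      linear_combination hd - ih
    | succ k =>
      have hp : lagP n (k + 1) = Polynomial.derivative (lagP n k) - lagP n k := rfl
      push_cast at ih hd ⊢
      simp only [Polynomial.derivative_add, Polynomial.derivative_sub,
        Polynomial.derivative_natCast, Polynomial.derivative_one, add_zero, zero_add,
        zero_mul, zero_sub, sub_zero] at hd
      linear_combination hd - ih + (((k : Polynomial ℝ)) + 1) * hp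

lemma lagP_ode (n : ℕ) :
    Polynomial.X * Polynomial.derivative (Polynomial.derivative (lagP n n))
      = Polynomial.X * Polynomial.derivative (lagP n n)
        - ((n : Polynomial ℝ) + 1) * lagP n n := by
  have ih := lagP_deriv_rec n n
  have hd := congrArg Polynomial.derivative ih
  simp only [Polynomial.derivative_mul, Polynomial.derivative_X, Polynomial.derivative_sub,
    Polynomial.derivative_add, Polynomial.derivative_natCast, Polynomial.derivative_one,
    one_mul, zero_mul, zero_sub, zero_add, add_zero, sub_zero, neg_zero] at hd
  cases n with
  | zero =>
    simp only [Nat.cast_zero, zero_add, zero_mul, sub_zero, zero_sub] at ih hd ⊢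
    linear_combination hd - ih
  | succ k =>
    have hp : lagP (k + 1) (k + 1) = Polynomial.derivative (lagP (k + 1) k) - lagP (k + 1) k :=
      rfl
    push_cast at ih hd ⊢
    linear_combination hd - ih + ((k : Polynomial ℝ) + 1) * hp

lemma lagV_hasDerivAt (r : Polynomial ℝ) (s : ℝ) :
    HasDerivAt (lagV r) (lagV (dh r) s) s := by
  have h1 : HasDerivAt (fun s : ℝ => Real.exp (-s / 2)) (Real.exp (-s / 2) * (-1 / 2)) s :=
    (((hasDerivAt_id s).neg).div_const 2).exp
  have h2 := h1.mul (r.hasDerivAt s)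
  refine h2.congr_deriv ?_
  simp [lagV, dh]
  ring

open Filter Topology in
lemma polyexp_tendsto (r : Polynomial ℝ) {a : ℝ} (ha : 0 < a) :
    Tendsto (fun t : ℝ => Real.exp (-(a * t)) * r.eval t) atTop (𝓝 0) := by
  have h := (r.comp (Polynomial.C a⁻¹ * Polynomial.X)).tendsto_div_exp_atTop
  have h2 : Tendsto (fun t : ℝ => a * t) atTop atTop :=
    Tendsto.const_mul_atTop ha tendsto_id
  refine (h.comp h2).congr fun t => ?_
  simp only [Function.comp_apply, Polynomial.eval_comp, Polynomial.eval_mul,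
    Polynomial.eval_C, Polynomial.eval_X]
  rw [inv_mul_cancel_left₀ ha.ne', Real.exp_neg, div_eq_mul_inv, mul_comm]

open Filter Topology in
lemma lagV_tendsto (r : Polynomial ℝ) : Tendsto (lagV r) atTop (𝓝 0) := by
  refine (polyexp_tendsto r (a := 2⁻¹) (by norm_num)).congr fun s => ?_
  rw [lagV, show -s / 2 = -(2⁻¹ * s) by ring]

lemma lagV_continuous (r : Polynomial ℝ) : Continuous (lagV r) :=
  (Real.continuous_exp.comp (continuous_neg.div_const 2)).mul r.continuous_aeval

lemma lagV_ode (n : ℕ) (s : ℝ) :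
    s * lagV (dh (dh (lagP n n))) s = (s / 4 - ((n : ℝ) + 1)) * lagV (lagP n n) s := by
  have hpoly : Polynomial.X * dh (dh (lagP n n))
      = (Polynomial.C (4⁻¹ : ℝ) * Polynomial.X - ((n : Polynomial ℝ) + 1)) * lagP n n := by
    have hc' : Polynomial.C (2⁻¹ : ℝ) * 2 = 1 := by
      rw [← map_ofNat Polynomial.C 2, ← Polynomial.C_mul]
      norm_num
    have hm' : Polynomial.C (2⁻¹ : ℝ) * Polynomial.C (2⁻¹ : ℝ) = Polynomial.C (4⁻¹ : ℝ) := by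
      rw [← Polynomial.C_mul]; norm_num
    simp only [dh, Polynomial.derivative_sub, Polynomial.derivative_C_mul]
    linear_combination lagP_ode n - (Polynomial.X * Polynomial.derivative (lagP n n)) * hc'
      + (Polynomial.X * lagP n n) * hm'
  have he := congrArg (Polynomial.eval s) hpoly
  simp only [Polynomial.eval_mul, Polynomial.eval_X, Polynomial.eval_C, Polynomial.eval_sub,
    Polynomial.eval_add, Polynomial.eval_natCast, Polynomial.eval_one] at he
  simp only [lagV]
  linear_combination Real.exp (-s / 2) * he

open Polynomial Filter Topology in
/-- For the Laguerre function `u(x) = x e^{−x/2} Lₙ⁽¹⁾(x)`, the integrable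
kernel `(u(x)u′(y) − u′(x)u(y))/(x−y)` equals
`(n+1) ∫₀^∞ u(x+t)u(y+t)/((x+t)(y+t)) dt`. -/
theorem laguerre_kernel_hankel_square
    (n : ℕ) (L u : ℝ → ℝ)
    (hL : ∀ x : ℝ, 0 < x →
      L x = x⁻¹ * Real.exp x / (n.factorial : ℝ) *
        iteratedDeriv n (fun t : ℝ => t ^ (n + 1) * Real.exp (-t)) x)
    (hu : ∀ x : ℝ, 0 < x → u x = x * Real.exp (-x / 2) * L x) :
    ∀ x y : ℝ, 0 < x → 0 < y → x ≠ y →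
      (u x * deriv u y - deriv u x * u y) / (x - y) =
        (n + 1) * ∫ t in Ioi (0 : ℝ), u (x + t) * u (y + t) / ((x + t) * (y + t)) := by
  have hc : ((n.factorial : ℝ)) ≠ 0 := Nat.cast_ne_zero.mpr n.factorial_ne_zero
  -- u agrees with lagV (lagP n n) / n! on positive reals
  have huq : ∀ s : ℝ, 0 < s → u s = lagV (lagP n n) s / (n.factorial : ℝ) := by
    intro s hs
    rw [hu s hs, hL s hs, lagP_iteratedDeriv n n s, lagV]
    rw [Real.exp_neg s]
    field_simp [hs.ne']
  have hud : ∀ s : ℝ, 0 < s → deriv u s = lagV (dh (lagP n n)) s / (n.factorial : ℝ) := by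
    intro s hs
    have hev : u =ᶠ[𝓝 s] fun z => lagV (lagP n n) z / (n.factorial : ℝ) := by
      filter_upwards [Ioi_mem_nhds hs] with z hz using huq z hz
    rw [hev.deriv_eq]
    exact ((lagV_hasDerivAt (lagP n n) s).div_const _).deriv
  intro x y hx hy hxy
  have hxy' : x - y ≠ 0 := sub_ne_zero.mpr hxy
  set c : ℝ := (n.factorial : ℝ) with hcdef
  set F : ℝ → ℝ := fun t =>
    (lagV (lagP n n) (x + t) * lagV (dh (lagP n n)) (y + t)
      - lagV (dh (lagP n n)) (x + t) * lagV (lagP n n) (y + t)) / ((x - y) * c ^ 2)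
    with hF
  set f' : ℝ → ℝ := fun t =>
    (-((n : ℝ) + 1)) * (lagV (lagP n n) (x + t) * lagV (lagP n n) (y + t)
      / ((x + t) * (y + t) * c ^ 2))
    with hf'
  -- shifted lagV has the obvious derivative
  have hshift : ∀ (r : Polynomial ℝ) (z t : ℝ),
      HasDerivAt (fun t => lagV r (z + t)) (lagV (dh r) (z + t)) t := by
    intro r z t
    have := HasDerivAt.comp t (lagV_hasDerivAt r (z + t)) ((hasDerivAt_id t).const_add z)
    simpa [Function.comp_def] using this
  -- pointwise ODE rewrite
  have hode : ∀ s : ℝ, s ≠ 0 → lagV (dh (dh (lagP n n))) s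
      = (s / 4 - ((n : ℝ) + 1)) * lagV (lagP n n) s / s := by
    intro s hs
    rw [eq_div_iff hs]
    linear_combination lagV_ode n s
  -- derivative computation
  have hderiv : ∀ t ∈ Ici (0 : ℝ), HasDerivAt F (f' t) t := by
    intro t ht
    have hxt : (0 : ℝ) < x + t := add_pos_of_pos_of_nonneg hx ht
    have hyt : (0 : ℝ) < y + t := add_pos_of_pos_of_nonneg hy ht
    have hD := (((hshift (lagP n n) x t).mul (hshift (dh (lagP n n)) y t)).sub
      ((hshift (dh (lagP n n)) x t).mul (hshift (lagP n n) y t))).div_const ((x - y) * c ^ 2)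
    have hval : (lagV (dh (lagP n n)) (x + t) * lagV (dh (lagP n n)) (y + t)
          + lagV (lagP n n) (x + t) * lagV (dh (dh (lagP n n))) (y + t)
        - (lagV (dh (dh (lagP n n))) (x + t) * lagV (lagP n n) (y + t)
          + lagV (dh (lagP n n)) (x + t) * lagV (dh (lagP n n)) (y + t)))
        / ((x - y) * c ^ 2) = f' t := by
      rw [hode _ hxt.ne', hode _ hyt.ne', hf']
      field_simp
      ring
    exact hval ▸ hD
  -- limit of F at infinity
  have hTx : ∀ (r : Polynomial ℝ) (z : ℝ),
      Tendsto (fun t => lagV r (z + t)) atTop (𝓝 0) :=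
    fun r z => (lagV_tendsto r).comp (tendsto_atTop_add_const_left atTop z tendsto_id)
  have hFtend : Tendsto F atTop (𝓝 0) := by
    have := (((hTx (lagP n n) x).mul (hTx (dh (lagP n n)) y)).sub
      ((hTx (dh (lagP n n)) x).mul (hTx (lagP n n) y))).div_const ((x - y) * c ^ 2)
    simpa using this
  -- integrability of f'
  have hcontV : ∀ (r : Polynomial ℝ) (z : ℝ), Continuous fun t : ℝ => lagV r (z + t) :=
    fun r z => (lagV_continuous r).comp (continuous_const.add continuous_id)
  have hcont : ContinuousOn f' (Ici 0) := by
    refine ContinuousOn.mul continuousOn_const (ContinuousOn.div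
      (((hcontV (lagP n n) x).mul (hcontV (lagP n n) y)).continuousOn)
      ((((continuous_const.add continuous_id).mul
        (continuous_const.add continuous_id)).mul continuous_const).continuousOn) ?_)
    intro t ht
    have hxt : (0 : ℝ) < x + t := add_pos_of_pos_of_nonneg hx ht
    have hyt : (0 : ℝ) < y + t := add_pos_of_pos_of_nonneg hy ht
    positivity
  have hbigO : f' =O[atTop] fun t : ℝ => Real.exp (-(2⁻¹) * t) := by
    refine Asymptotics.IsLittleO.isBigO ?_
    rw [Asymptotics.isLittleO_iff_tendsto fun t h => absurd h (Real.exp_ne_zero _)]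
    set S : Polynomial ℝ := (lagP n n).comp (Polynomial.C x + Polynomial.X)
      * (lagP n n).comp (Polynomial.C y + Polynomial.X) with hS
    have hSeval : ∀ t : ℝ, S.eval t = (lagP n n).eval (x + t) * (lagP n n).eval (y + t) := by
      intro t; simp [hS, Polynomial.eval_comp]
    have key : Tendsto (fun t : ℝ => (-((n : ℝ) + 1)) * (Real.exp (-(x + y) / 2)
        * ((Real.exp (-(2⁻¹ * t)) * S.eval t) * ((x + t) * (y + t) * c ^ 2)⁻¹)))
        atTop (𝓝 0) := by
      have h1 := polyexp_tendsto S (a := 2⁻¹) (by norm_num)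
      have h2 : Tendsto (fun t : ℝ => ((x + t) * (y + t) * c ^ 2)⁻¹) atTop (𝓝 0) := by
        refine Tendsto.inv_tendsto_atTop ?_
        refine Tendsto.atTop_mul_const (by positivity) ?_
        exact (tendsto_atTop_add_const_left atTop x tendsto_id).atTop_mul_atTop₀
          (tendsto_atTop_add_const_left atTop y tendsto_id)
      have h3 := ((h1.mul h2).const_mul (Real.exp (-(x + y) / 2))).const_mul (-((n : ℝ) + 1))
      simpa [mul_assoc] using h3
    refine Tendsto.congr' ?_ key
    filter_upwards [eventually_gt_atTop (0 : ℝ)] with t ht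
    have hxt : (0 : ℝ) < x + t := by linarith
    have hyt : (0 : ℝ) < y + t := by linarith
    have hexp : Real.exp (-(x + t) / 2) * Real.exp (-(y + t) / 2)
        = Real.exp (-(x + y) / 2) * Real.exp (-(2⁻¹ * t)) * Real.exp (-(2⁻¹ : ℝ) * t) := by
      rw [← Real.exp_add, ← Real.exp_add, ← Real.exp_add]
      congr 1
      ring
    have hnum : lagV (lagP n n) (x + t) * lagV (lagP n n) (y + t)
        = Real.exp (-(x + y) / 2) * (Real.exp (-(2⁻¹ * t)) * S.eval t)
          * Real.exp (-(2⁻¹ : ℝ) * t) := by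
      simp only [lagV]
      rw [mul_mul_mul_comm, hexp, ← hSeval]
      ring
    rw [hf']
    simp only [hnum]
    field_simp
  have hint : IntegrableOn f' (Ioi 0) :=
    integrable_of_isBigO_exp_neg (by norm_num : (0 : ℝ) < 2⁻¹) hcont hbigO
  have hFTC := integral_Ioi_of_hasDerivAt_of_tendsto' hderiv hint hFtend
  -- identify the integrand
  have hIeq : (∫ t in Ioi (0 : ℝ), u (x + t) * u (y + t) / ((x + t) * (y + t)))
      = ∫ t in Ioi (0 : ℝ), lagV (lagP n n) (x + t) * lagV (lagP n n) (y + t)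
          / ((x + t) * (y + t) * c ^ 2) := by
    refine setIntegral_congr_fun measurableSet_Ioi fun t ht => ?_
    have ht0 : (0 : ℝ) < t := ht
    have hxt : (0 : ℝ) < x + t := by linarith
    have hyt : (0 : ℝ) < y + t := by linarith
    rw [huq _ hxt, huq _ hyt,
      div_eq_div_iff (by positivity : (x + t) * (y + t) ≠ 0) (by positivity :
        (x + t) * (y + t) * c ^ 2 ≠ 0)]
    field_simp [hc]
  have hI2 : (∫ t in Ioi (0 : ℝ), f' t)
      = (-((n : ℝ) + 1)) * ∫ t in Ioi (0 : ℝ),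
          lagV (lagP n n) (x + t) * lagV (lagP n n) (y + t)
            / ((x + t) * (y + t) * c ^ 2) := by
    rw [hf', integral_const_mul]
  rw [huq x hx, huq y hy, hud x hx, hud y hy, hIeq]
  have hkey : ((n : ℝ) + 1) * (∫ t in Ioi (0 : ℝ),
      lagV (lagP n n) (x + t) * lagV (lagP n n) (y + t)
        / ((x + t) * (y + t) * c ^ 2)) = F 0 := by
    rw [hI2] at hFTC
    linarith
  rw [hkey, hF]
  simp only [add_zero]
  rw [div_eq_div_iff (by exact sub_ne_zero.mpr hxy : x - y ≠ 0)
    (mul_ne_zero hxy' (pow_ne_zero 2 hc))]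
  field_simp [hc]
end

section
/- Let n be a nonnegative integer and define u : (0,∞) → ℝ by u(x) = x e^{−x/2} L_n^{(1)}(x), where L_n^{(1)}(x) = (x^{−1} e^{x}/n!) · dⁿ/dxⁿ ( x^{n+1} e^{−x} ). Then for every complex number λ with Re λ > −1/2, the Laplace transform of u satisfies ∫_0^∞ e^{−λ x} u(x) dx = (n+1) (λ − 1/2)^n / (λ + 1/2)^{n+2}. -/
open Real MeasureTheory Set Complex

section Helpers
open Filter Topology Polynomial

lemma hasDerivAt_cexp_neg_mul (s : ℂ) (x : ℝ) :
    HasDerivAt (fun x : ℝ => Complex.exp (-s * x)) (-s * Complex.exp (-s * x)) x := by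
  have h1 : HasDerivAt (fun x : ℝ => -s * (x : ℂ)) (-s) x := by
    simpa using (Complex.ofRealCLM.hasDerivAt (x := x)).const_mul (-s)
  simpa [mul_comm] using h1.cexp

lemma monomial_tendsto (k : ℕ) (s : ℂ) (hs : 0 < s.re) :
    Tendsto (fun x : ℝ => (x : ℂ) ^ k * Complex.exp (-s * x)) atTop (𝓝 0) := by
  rw [tendsto_zero_iff_norm_tendsto_zero]
  have h := tendsto_rpow_mul_exp_neg_mul_atTop_nhds_zero (k : ℝ) s.re hs
  apply h.congr'
  filter_upwards [eventually_gt_atTop (0:ℝ)] with x hx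
  have : ‖(x:ℂ) ^ k‖ = x ^ k := by
    rw [norm_pow, Complex.norm_real, Real.norm_of_nonneg hx.le]
  rw [norm_mul, this, Complex.norm_exp]
  simp [Real.rpow_natCast, mul_comm]

lemma monomial_integrable (k : ℕ) (s : ℂ) (hs : 0 < s.re) :
    IntegrableOn (fun x : ℝ => (x : ℂ) ^ k * Complex.exp (-s * x)) (Ioi 0) := by
  have hbase : IntegrableOn (fun x : ℝ => x ^ (k:ℝ) * Real.exp (-s.re * x ^ (1:ℝ))) (Ioi 0) :=
    integrableOn_rpow_mul_exp_neg_mul_rpow (neg_one_lt_zero.trans_le (Nat.cast_nonneg k)) one_pos hs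
  apply Integrable.mono' hbase
  · exact (Continuous.aestronglyMeasurable (by continuity)).restrict
  · filter_upwards [ae_restrict_mem measurableSet_Ioi] with x (hx : 0 < x)
    rw [norm_mul, norm_pow, Complex.norm_real, Real.norm_of_nonneg hx.le,
      Complex.norm_exp]
    simp [Real.rpow_natCast, Real.rpow_one, mul_comm, le_refl]



lemma laplace_pow (s : ℂ) (hs : 0 < s.re) : ∀ k : ℕ,
    ∫ x in Ioi (0:ℝ), (x : ℂ) ^ k * Complex.exp (-s * x) = k.factorial / s ^ (k + 1) := by
  have hs0 : s ≠ 0 := fun h => by simp [h] at hs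
  intro k
  induction k with
  | zero =>
    have key : ∫ x in Ioi (0:ℝ), Complex.exp (-s * x) = 0 - (-Complex.exp (-s * 0) / s) := by
      apply integral_Ioi_of_hasDerivAt_of_tendsto
        (f := fun x : ℝ => -Complex.exp (-s * x) / s)
      · exact (Continuous.continuousWithinAt (by continuity))
      · intro x _
        have := ((hasDerivAt_cexp_neg_mul s x).neg).div_const s
        simpa [neg_mul, neg_neg, mul_div_assoc, mul_comm, mul_div_cancel_left₀ _ hs0] using this
      · simpa using monomial_integrable 0 s hs
      · have := ((monomial_tendsto 0 s hs).neg).div_const s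
        simpa using this
    simp only [pow_zero, one_mul]
    rw [key]
    push_cast
    rw [pow_one]
    simp [neg_div]
  | succ k ih =>
    have hibp := integral_Ioi_mul_deriv_eq_deriv_mul
      (u := fun x : ℝ => (x : ℂ) ^ (k+1)) (u' := fun x : ℝ => (k+1) * (x : ℂ) ^ k)
      (v := fun x : ℝ => -Complex.exp (-s * x) / s) (v' := fun x : ℝ => Complex.exp (-s * x))
      (a := 0) (a' := 0) (b' := 0)
      (fun x _ => by
        simpa using (((hasDerivAt_pow (k+1) (x:ℂ)).comp_ofReal)))
      (fun x _ => by
        have := ((hasDerivAt_cexp_neg_mul s x).neg).div_const s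
        simpa [neg_mul, neg_neg, mul_div_assoc, mul_comm, mul_div_cancel_left₀ _ hs0] using this)
      (by exact monomial_integrable (k+1) s hs)
      (by
        have h := (monomial_integrable k s hs).const_mul (-(k+1 : ℂ)/s)
        exact h.congr (Filter.Eventually.of_forall fun x => by
          simp only [Pi.mul_apply]; push_cast; ring))
      (by
        have hc : ContinuousWithinAt (fun x : ℝ => ((x:ℂ))^(k+1) * (-Complex.exp (-s * x) / s)) (Ioi 0) 0 :=
          Continuous.continuousWithinAt (by continuity)
        rw [ContinuousWithinAt] at hc
        have h0 : ((0:ℝ):ℂ) ^ (k+1) * (-Complex.exp (-s * (0:ℝ)) / s) = 0 := by simp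
        rw [h0] at hc
        exact hc)
      (by
        have h := ((monomial_tendsto (k+1) s hs).neg).div_const s
        have h2 : Tendsto (fun x : ℝ => ((x:ℂ))^(k+1) * (-Complex.exp (-s * x) / s)) atTop (𝓝 0) := by
          apply Tendsto.congr _ (by simpa using h)
          intro x; ring
        exact h2)
    rw [hibp]
    have : ∫ x in Ioi (0:ℝ), ((k:ℂ)+1) * (x:ℂ)^k * (-Complex.exp (-s * x)/s)
        = (-(k+1)/s) * ∫ x in Ioi (0:ℝ), (x:ℂ)^k * Complex.exp (-s * x) := by
      rw [← integral_const_mul]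
      congr 1; funext x; ring
    push_cast
    rw [this, ih]
    rw [Nat.factorial_succ]
    push_cast
    field_simp
    ring


noncomputable def lagAux (m : ℕ) : ℕ → Polynomial ℝ
  | 0 => Polynomial.X ^ m
  | (k+1) => (lagAux m k).derivative - lagAux m k

lemma lagAux_iteratedDeriv (m : ℕ) : ∀ (k : ℕ) (x : ℝ),
    iteratedDeriv k (fun t : ℝ => t ^ m * Real.exp (-t)) x
      = (lagAux m k).eval x * Real.exp (-x) := by
  intro k
  induction k with
  | zero => intro x; simp [lagAux]
  | succ k ih =>
    intro x
    have hfun : iteratedDeriv k (fun t : ℝ => t ^ m * Real.exp (-t))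
        = fun x => (lagAux m k).eval x * Real.exp (-x) := funext ih
    rw [iteratedDeriv_succ, hfun]
    have h2 : HasDerivAt (fun x : ℝ => Real.exp (-x)) (-Real.exp (-x)) x := by
      simpa using (hasDerivAt_neg x).exp
    have hd := ((lagAux m k).hasDerivAt x).mul h2
    have hval : (lagAux m k).derivative.eval x * Real.exp (-x)
        + (lagAux m k).eval x * (-Real.exp (-x))
        = (lagAux m (k+1)).eval x * Real.exp (-x) := by
      show _ = ((lagAux m k).derivative - lagAux m k).eval x * _
      rw [eval_sub]; ring
    rw [← hval]
    exact hd.deriv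

lemma lagAux_dvd (m : ℕ) : ∀ k : ℕ, (Polynomial.X : Polynomial ℝ) ^ (m - k) ∣ lagAux m k := by
  intro k
  induction k with
  | zero => simp [lagAux]
  | succ k ih =>
    obtain ⟨r, hr⟩ := ih
    have h1 : (Polynomial.X : Polynomial ℝ) ^ (m - (k+1)) ∣ (lagAux m k).derivative := by
      rw [hr, derivative_mul, derivative_X_pow]
      apply dvd_add
      · rw [Nat.sub_sub]
        exact (dvd_mul_left _ _).mul_right r
      · exact ((pow_dvd_pow (Polynomial.X : Polynomial ℝ) (by omega : m - (k+1) ≤ m - k)).mul_right _)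
    have h2 : (Polynomial.X : Polynomial ℝ) ^ (m - (k+1)) ∣ lagAux m k :=
      dvd_trans (pow_dvd_pow _ (by omega)) ⟨r, hr⟩
    show _ ∣ (lagAux m k).derivative - lagAux m k
    exact dvd_sub h1 h2

lemma lagAux_eval_zero {m k : ℕ} (h : k < m) : (lagAux m k).eval 0 = 0 := by
  have := lagAux_dvd m k
  obtain ⟨r, hr⟩ := dvd_trans (dvd_pow_self (Polynomial.X : Polynomial ℝ) (by omega : m - k ≠ 0)) this
  rw [hr]; simp



lemma poly_cexp_eq (p : Polynomial ℝ) (s : ℂ) :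
    (fun x : ℝ => ((p.eval x : ℝ) : ℂ) * Complex.exp (-s * x))
      = fun x : ℝ => ∑ i ∈ Finset.range (p.natDegree + 1),
          (p.coeff i : ℂ) * ((x : ℂ) ^ i * Complex.exp (-s * x)) := by
  funext x
  have : ((p.eval x : ℝ) : ℂ) = ∑ i ∈ Finset.range (p.natDegree + 1), (p.coeff i : ℂ) * (x : ℂ) ^ i := by
    rw [eval_eq_sum_range]
    push_cast
    rfl
  rw [this, Finset.sum_mul]
  congr 1; funext i; ring

lemma poly_cexp_integrable (p : Polynomial ℝ) (s : ℂ) (hs : 0 < s.re) :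
    IntegrableOn (fun x : ℝ => ((p.eval x : ℝ) : ℂ) * Complex.exp (-s * x)) (Ioi 0) := by
  rw [poly_cexp_eq p s]
  exact integrable_finset_sum _ fun i _ => (monomial_integrable i s hs).const_mul _

lemma poly_cexp_tendsto (p : Polynomial ℝ) (s : ℂ) (hs : 0 < s.re) :
    Tendsto (fun x : ℝ => ((p.eval x : ℝ) : ℂ) * Complex.exp (-s * x)) atTop (𝓝 0) := by
  rw [poly_cexp_eq p s]
  have := tendsto_finset_sum (Finset.range (p.natDegree + 1))
    (fun i _ => ((monomial_tendsto i s hs).const_mul ((p.coeff i : ℂ))))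
  simpa using this




lemma cexp_combine (μ : ℂ) (x : ℝ) (q : ℂ) :
    Complex.exp (-μ * x) * (q * Complex.exp (-(x:ℂ))) = q * Complex.exp (-(μ+1) * x) := by
  calc Complex.exp (-μ * x) * (q * Complex.exp (-(x:ℂ)))
      = q * (Complex.exp (-μ * x) * Complex.exp (-(x:ℂ))) := by ring
    _ = q * Complex.exp (-μ * x + -(x:ℂ)) := by rw [Complex.exp_add]
    _ = q * Complex.exp (-(μ+1) * x) := by congr 1; ring

lemma laplace_step (m k : ℕ) (hk : (lagAux m k).eval 0 = 0) (μ : ℂ) (hμ : 0 < μ.re + 1) :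
    ∫ x in Ioi (0:ℝ), (((lagAux m (k+1)).eval x : ℝ) : ℂ) * Complex.exp (-(μ+1) * x)
      = μ * ∫ x in Ioi (0:ℝ), (((lagAux m k).eval x : ℝ) : ℂ) * Complex.exp (-(μ+1) * x) := by
  have hs : 0 < (μ+1).re := by simpa [Complex.add_re] using hμ
  have hvderiv : ∀ x : ℝ, HasDerivAt (fun x : ℝ => (((lagAux m k).eval x : ℝ) : ℂ) * Complex.exp (-(x:ℂ)))
      ((((lagAux m (k+1)).eval x : ℝ) : ℂ) * Complex.exp (-(x:ℂ))) x := by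
    intro x
    have h1 : HasDerivAt (fun x : ℝ => (((lagAux m k).eval x : ℝ) : ℂ))
        (((lagAux m k).derivative.eval x : ℝ) : ℂ) x := ((lagAux m k).hasDerivAt x).ofReal_comp
    have h2 : HasDerivAt (fun x : ℝ => Complex.exp (-(x:ℂ))) (-Complex.exp (-(x:ℂ))) x := by
      have := hasDerivAt_cexp_neg_mul 1 x
      simpa using this
    have := h1.mul h2
    have hval : (((lagAux m k).derivative.eval x : ℝ) : ℂ) * Complex.exp (-(x:ℂ))
        + (((lagAux m k).eval x : ℝ) : ℂ) * (-Complex.exp (-(x:ℂ)))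
        = (((lagAux m (k+1)).eval x : ℝ) : ℂ) * Complex.exp (-(x:ℂ)) := by
      show _ = ((((lagAux m k).derivative - lagAux m k).eval x : ℝ) : ℂ) * _
      rw [eval_sub]
      push_cast
      ring
    rw [← hval]
    exact this
  have hibp := integral_Ioi_mul_deriv_eq_deriv_mul
    (u := fun x : ℝ => Complex.exp (-μ * x)) (u' := fun x : ℝ => -μ * Complex.exp (-μ * x))
    (v := fun x : ℝ => (((lagAux m k).eval x : ℝ) : ℂ) * Complex.exp (-(x:ℂ)))
    (v' := fun x : ℝ => (((lagAux m (k+1)).eval x : ℝ) : ℂ) * Complex.exp (-(x:ℂ)))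
    (a := 0) (a' := 0) (b' := 0)
    (fun x _ => hasDerivAt_cexp_neg_mul μ x)
    (fun x _ => hvderiv x)
    (by
      have h := poly_cexp_integrable (lagAux m (k+1)) (μ+1) hs
      exact h.congr (Filter.Eventually.of_forall fun x => (cexp_combine μ x _).symm))
    (by
      have h := (poly_cexp_integrable (lagAux m k) (μ+1) hs).const_mul (-μ)
      exact h.congr (Filter.Eventually.of_forall fun x => by
        show -μ * ((((lagAux m k).eval x : ℝ) : ℂ) * Complex.exp (-(μ+1) * x)) = _
        rw [← cexp_combine μ x]
        show _ = (-μ * Complex.exp (-μ * x)) * ((((lagAux m k).eval x : ℝ) : ℂ) * Complex.exp (-(x:ℂ)))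
        ring))
    (by
      have hc : ContinuousWithinAt (fun x : ℝ => Complex.exp (-μ * x) *
          ((((lagAux m k).eval x : ℝ) : ℂ) * Complex.exp (-(x:ℂ)))) (Ioi 0) 0 :=
        Continuous.continuousWithinAt (by
          apply Continuous.mul
          · continuity
          · apply Continuous.mul
            · exact Complex.continuous_ofReal.comp (lagAux m k).continuous
            · continuity)
      rw [ContinuousWithinAt] at hc
      have h0 : Complex.exp (-μ * (0:ℝ)) * ((((lagAux m k).eval (0:ℝ) : ℝ) : ℂ) * Complex.exp (-((0:ℝ):ℂ))) = 0 := by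
        rw [hk]; simp
      rw [h0] at hc
      exact hc)
    (by
      have h := poly_cexp_tendsto (lagAux m k) (μ+1) hs
      exact Tendsto.congr (fun x => (cexp_combine μ x _).symm) h)
  have e1 : ∫ x in Ioi (0:ℝ), Complex.exp (-μ * x) * ((((lagAux m (k+1)).eval x : ℝ) : ℂ) * Complex.exp (-(x:ℂ)))
      = ∫ x in Ioi (0:ℝ), (((lagAux m (k+1)).eval x : ℝ) : ℂ) * Complex.exp (-(μ+1) * x) := by
    congr 1; funext x; rw [cexp_combine]
  have e2 : ∫ x in Ioi (0:ℝ), -μ * Complex.exp (-μ * x) * ((((lagAux m k).eval x : ℝ) : ℂ) * Complex.exp (-(x:ℂ)))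
      = -μ * ∫ x in Ioi (0:ℝ), (((lagAux m k).eval x : ℝ) : ℂ) * Complex.exp (-(μ+1) * x) := by
    rw [← integral_const_mul]
    congr 1; funext x; rw [mul_assoc, cexp_combine]
  rw [← e1, hibp, e2]
  ring

end Helpers

/-- The Laplace transform of the Laguerre function
`u(x) = x e^{−x/2} Lₙ⁽¹⁾(x)` is `(n+1)(λ−1/2)ⁿ/(λ+1/2)^{n+2}` for `Re λ > −1/2`. -/
theorem laguerre_laplace_transform
    (n : ℕ) (L u : ℝ → ℝ)
    (hL : ∀ x : ℝ, 0 < x →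
      L x = x⁻¹ * Real.exp x / (n.factorial : ℝ) *
        iteratedDeriv n (fun t : ℝ => t ^ (n + 1) * Real.exp (-t)) x)
    (hu : ∀ x : ℝ, 0 < x → u x = x * Real.exp (-x / 2) * L x) :
    ∀ lam : ℂ, -(1 / 2) < lam.re →
      ∫ x in Ioi (0 : ℝ), Complex.exp (-lam * x) * (u x : ℂ) =
        (n + 1) * (lam - 1 / 2) ^ n / (lam + 1 / 2) ^ (n + 2) := by
  intro lam hlam
  set μ : ℂ := lam - 1/2 with hμdef
  have hμ : 0 < μ.re + 1 := by
    have : μ.re = lam.re - 1/2 := by simp [hμdef]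
    rw [this]; linarith
  have hμ1 : μ + 1 = lam + 1/2 := by ring
  have hs : 0 < (μ + 1).re := by simpa [Complex.add_re] using hμ
  -- the recursion
  have key : ∀ k : ℕ, k ≤ n →
      (∫ x in Ioi (0:ℝ), (((lagAux (n+1) k).eval x : ℝ) : ℂ) * Complex.exp (-(μ+1) * x))
        = μ ^ k * ∫ x in Ioi (0:ℝ), (((lagAux (n+1) 0).eval x : ℝ) : ℂ) * Complex.exp (-(μ+1) * x) := by
    intro k
    induction k with
    | zero => intro _; simp
    | succ k ih =>
      intro hk
      rw [laplace_step (n+1) k (lagAux_eval_zero (by omega)) μ hμ, ih (by omega)]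
      ring
  have base : (∫ x in Ioi (0:ℝ), (((lagAux (n+1) 0).eval x : ℝ) : ℂ) * Complex.exp (-(μ+1) * x))
      = ((n+1).factorial : ℂ) / (μ+1) ^ (n+2) := by
    have : (∫ x in Ioi (0:ℝ), (((lagAux (n+1) 0).eval x : ℝ) : ℂ) * Complex.exp (-(μ+1) * x))
        = ∫ x in Ioi (0:ℝ), (x : ℂ) ^ (n+1) * Complex.exp (-(μ+1) * x) := by
      congr 1; funext x
      show (((Polynomial.X ^ (n+1) : Polynomial ℝ).eval x : ℝ) : ℂ) * _ = _
      push_cast [Polynomial.eval_pow, Polynomial.eval_X]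
      ring
    rw [this, laplace_pow (μ+1) hs (n+1)]
  -- rewrite the integrand
  have hint : (∫ x in Ioi (0:ℝ), Complex.exp (-lam * x) * (u x : ℂ))
      = (1 / (n.factorial : ℂ)) *
        ∫ x in Ioi (0:ℝ), (((lagAux (n+1) n).eval x : ℝ) : ℂ) * Complex.exp (-(μ+1) * x) := by
    rw [← integral_const_mul]
    apply setIntegral_congr_fun measurableSet_Ioi
    intro x hx
    have hx0 : (0:ℝ) < x := hx
    have hbc : Real.exp x * Real.exp (-x) = 1 := by
      rw [← Real.exp_add]; simp
    have hux : u x = Real.exp (-x/2) * (lagAux (n+1) n).eval x / (n.factorial : ℝ) := by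
      rw [hu x hx0, hL x hx0, lagAux_iteratedDeriv (n+1) n x]
      field_simp
      linear_combination (lagAux (n+1) n).eval x * hbc
    have hexp : Complex.exp (-lam * x) * ((Real.exp (-x/2) : ℝ) : ℂ) = Complex.exp (-(μ+1) * x) := by
      rw [Complex.ofReal_exp, ← Complex.exp_add]
      congr 1
      push_cast
      rw [hμ1]
      ring
    dsimp only
    rw [hux]
    calc Complex.exp (-lam * x) * ((Real.exp (-x/2) * (lagAux (n+1) n).eval x / (n.factorial : ℝ) : ℝ) : ℂ)
        = (1/(n.factorial : ℂ)) * (((lagAux (n+1) n).eval x : ℝ) : ℂ)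
          * (Complex.exp (-lam * x) * ((Real.exp (-x/2) : ℝ) : ℂ)) := by
          push_cast; ring
      _ = 1 / (n.factorial : ℂ) * ((((lagAux (n+1) n).eval x : ℝ) : ℂ) * Complex.exp (-(μ+1) * x)) := by
          rw [hexp]; ring
  rw [hint, key n le_rfl, base]
  have hfact : ((n+1).factorial : ℂ) = (n+1) * (n.factorial : ℂ) := by
    rw [Nat.factorial_succ]; push_cast; ring
  have hnf : (n.factorial : ℂ) ≠ 0 := by exact_mod_cast Nat.factorial_ne_zero n
  rw [hfact, ← hμ1]
  have hne : (μ + 1 : ℂ) ≠ 0 := fun h => by simp [h] at hs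
  field_simp
end

section
/- Define u : (0,∞) → ℝ by the convergent power series u(x) = Σ_{k=0}^∞ (−1)^k x^{k+1} / ( k! (k+1)! ), so that u(x) = √x · J_1(2√x) where J_1 is the Bessel function of the first kind of order one. Then for all x, y > 0 with x ≠ y: ( u(x) u′(y) − u′(x) u(y) )/(x−y) = ∫_0^∞ u(x+t) u(y+t) / ( (x+t)(y+t) ) dt. -/
set_option maxHeartbeats 1000000

open Real MeasureTheory Set

noncomputable def besselU (x : ℝ) : ℝ := ∑' k : ℕ,
  (-1 : ℝ) ^ k * x ^ (k + 1) / ((k.factorial : ℝ) * ((k + 1).factorial : ℝ))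

noncomputable def besselV (x : ℝ) : ℝ := ∑' k : ℕ,
  (-1 : ℝ) ^ k * x ^ k / ((k.factorial : ℝ) * (k.factorial : ℝ))

noncomputable def besselW (x : ℝ) : ℝ := ∑' k : ℕ,
  (-1 : ℝ) ^ (k + 1) * x ^ k / ((k.factorial : ℝ) * ((k + 1).factorial : ℝ))

lemma fact_one_le (k : ℕ) : (1:ℝ) ≤ (k.factorial : ℝ) := by
  exact_mod_cast k.factorial_pos

lemma fact_succ_real (k : ℕ) : (((k+1).factorial : ℕ) : ℝ) = ((k:ℝ)+1) * (k.factorial : ℝ) := by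
  rw [Nat.factorial_succ]; push_cast; ring

lemma hasDerivAt_besselU (x : ℝ) : HasDerivAt besselU (besselV x) x := by
  set R : ℝ := |x| + 1 with hR
  have hR1 : 1 ≤ R := by have := abs_nonneg x; linarith
  have hxR : x ∈ Metric.ball (0:ℝ) R := by
    simp only [Metric.mem_ball, Real.dist_eq, sub_zero, hR]; linarith
  have hsum : Summable (fun k : ℕ => R ^ k / (k.factorial : ℝ)) :=
    Real.summable_pow_div_factorial R
  have hterm : ∀ (k : ℕ) (y : ℝ), HasDerivAt
      (fun z => (-1 : ℝ) ^ k * z ^ (k + 1) / ((k.factorial : ℝ) * ((k + 1).factorial : ℝ)))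
      ((-1 : ℝ) ^ k * (((k:ℝ)+1) * y ^ k) / ((k.factorial : ℝ) * ((k + 1).factorial : ℝ))) y := by
    intro k y
    have h1 : HasDerivAt (fun z : ℝ => z ^ (k+1)) (((k:ℝ)+1) * y ^ k) y := by
      simpa using hasDerivAt_pow (k+1) y
    simpa [mul_div_assoc] using (h1.const_mul ((-1:ℝ)^k)).div_const
      ((k.factorial : ℝ) * ((k + 1).factorial : ℝ))
  have hbound : ∀ (k : ℕ) (y : ℝ), y ∈ Metric.ball (0:ℝ) R →
      ‖(-1 : ℝ) ^ k * (((k:ℝ)+1) * y ^ k) / ((k.factorial : ℝ) * ((k + 1).factorial : ℝ))‖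
        ≤ R ^ k / (k.factorial : ℝ) := by
    intro k y hy
    have hyR : |y| ≤ R := by
      have := Metric.mem_ball.mp hy
      rw [Real.dist_eq, sub_zero] at this
      exact this.le
    have h2 : |y| ^ k ≤ R ^ k := pow_le_pow_left₀ (abs_nonneg y) hyR k
    rw [Real.norm_eq_abs, abs_div, abs_mul, abs_pow, abs_neg, abs_one, one_pow, one_mul,
      abs_mul, abs_of_pos (by positivity : (0:ℝ) < ((k:ℝ)+1)), abs_pow,
      abs_of_pos (by positivity : (0:ℝ) < (k.factorial : ℝ) * ((k + 1).factorial : ℝ))]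
    calc ((k:ℝ)+1) * |y| ^ k / ((k.factorial:ℝ) * ((k+1).factorial:ℝ))
        = |y| ^ k / ((k.factorial:ℝ) * (k.factorial:ℝ)) := by
          rw [fact_succ_real]
          have : ((k:ℝ)+1) ≠ 0 := by positivity
          field_simp
      _ ≤ R ^ k / ((k.factorial:ℝ) * (k.factorial:ℝ)) := by gcongr
      _ ≤ R ^ k / (k.factorial : ℝ) := by
          have h3 : (k.factorial:ℝ) ≤ (k.factorial:ℝ)*(k.factorial:ℝ) := by
            nlinarith [fact_one_le k]
          gcongr
  have hsum0 : Summable (fun k : ℕ =>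
      (-1 : ℝ) ^ k * x ^ (k + 1) / ((k.factorial : ℝ) * ((k + 1).factorial : ℝ))) := by
    refine Summable.of_norm_bounded (hsum.mul_left R) ?_
    intro k
    rw [Real.norm_eq_abs, abs_div, abs_mul, abs_pow, abs_neg, abs_one, one_pow, one_mul,
      abs_pow, abs_of_pos (by positivity : (0:ℝ) < (k.factorial : ℝ) * ((k + 1).factorial : ℝ))]
    have h2 : |x| ^ (k+1) ≤ R ^ (k+1) :=
      pow_le_pow_left₀ (abs_nonneg x) (by linarith) (k+1)
    calc |x| ^ (k+1) / ((k.factorial:ℝ) * ((k+1).factorial:ℝ))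
        ≤ R ^ (k+1) / ((k.factorial:ℝ) * ((k+1).factorial:ℝ)) := by gcongr
      _ ≤ R ^ (k+1) / (k.factorial : ℝ) := by
          have h3 : (k.factorial:ℝ) ≤ (k.factorial:ℝ)*((k+1).factorial:ℝ) := by
            nlinarith [fact_one_le k, fact_one_le (k+1)]
          gcongr
      _ = R * (R ^ k / (k.factorial:ℝ)) := by rw [pow_succ]; ring
  have key : HasDerivAt (fun z => ∑' k : ℕ,
      (-1 : ℝ) ^ k * z ^ (k + 1) / ((k.factorial : ℝ) * ((k + 1).factorial : ℝ)))
      (∑' k : ℕ, (-1 : ℝ) ^ k * (((k:ℝ)+1) * x ^ k) / ((k.factorial : ℝ) * ((k + 1).factorial : ℝ))) x :=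
    hasDerivAt_tsum_of_isPreconnected hsum Metric.isOpen_ball
      (convex_ball (0:ℝ) R).isPreconnected
      (fun k y _ => hterm k y) hbound hxR hsum0 hxR
  have heq : (∑' k : ℕ, (-1 : ℝ) ^ k * (((k:ℝ)+1) * x ^ k) / ((k.factorial : ℝ) * ((k + 1).factorial : ℝ)))
      = besselV x := by
    apply tsum_congr
    intro k
    rw [fact_succ_real]
    have h1 : ((k:ℝ)+1) ≠ 0 := by positivity
    have h2 := fact_one_le k
    field_simp
  rw [← heq]
  exact key

lemma hasDerivAt_besselV (x : ℝ) : HasDerivAt besselV (besselW x) x := by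
  set R : ℝ := |x| + 1 with hR
  have hR1 : 1 ≤ R := by have := abs_nonneg x; linarith
  have hxR : x ∈ Metric.ball (0:ℝ) R := by
    simp only [Metric.mem_ball, Real.dist_eq, sub_zero, hR]; linarith
  have hsum : Summable (fun k : ℕ => (2*R) ^ k / (k.factorial : ℝ)) :=
    Real.summable_pow_div_factorial (2*R)
  have hterm : ∀ (k : ℕ) (y : ℝ), HasDerivAt
      (fun z => (-1 : ℝ) ^ k * z ^ k / ((k.factorial : ℝ) * (k.factorial : ℝ)))
      ((-1 : ℝ) ^ k * ((k:ℝ) * y ^ (k-1)) / ((k.factorial : ℝ) * (k.factorial : ℝ))) y := by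
    intro k y
    have h1 : HasDerivAt (fun z : ℝ => z ^ k) ((k:ℝ) * y ^ (k-1)) y := hasDerivAt_pow k y
    simpa [mul_div_assoc] using (h1.const_mul ((-1:ℝ)^k)).div_const
      ((k.factorial : ℝ) * (k.factorial : ℝ))
  have hbnd : ∀ (k : ℕ) (y : ℝ), |y| ≤ R →
      ‖(-1 : ℝ) ^ k * ((k:ℝ) * y ^ (k-1)) / ((k.factorial : ℝ) * (k.factorial : ℝ))‖
        ≤ (2*R) ^ k / (k.factorial : ℝ) := by
    intro k y hyR
    have hk2 : (k:ℝ) ≤ 2 ^ k := by exact_mod_cast (Nat.lt_two_pow_self (n := k)).le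
    have h2 : |y| ^ (k-1) ≤ R ^ k :=
      (pow_le_pow_left₀ (abs_nonneg y) hyR (k-1)).trans
        (pow_le_pow_right₀ hR1 (Nat.sub_le k 1))
    rw [Real.norm_eq_abs, abs_div, abs_mul, abs_pow, abs_neg, abs_one, one_pow, one_mul,
      abs_mul, Nat.abs_cast, abs_pow,
      abs_of_pos (by positivity : (0:ℝ) < (k.factorial : ℝ) * (k.factorial : ℝ))]
    calc (k:ℝ) * |y| ^ (k-1) / ((k.factorial:ℝ) * (k.factorial:ℝ))
        ≤ 2 ^ k * R ^ k / ((k.factorial:ℝ) * (k.factorial:ℝ)) := by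
          gcongr
      _ ≤ 2 ^ k * R ^ k / (k.factorial : ℝ) := by
          have h3 : (k.factorial:ℝ) ≤ (k.factorial:ℝ)*(k.factorial:ℝ) := by
            nlinarith [fact_one_le k]
          gcongr
      _ = (2*R) ^ k / (k.factorial : ℝ) := by rw [mul_pow]
  have hsum0 : Summable (fun k : ℕ =>
      (-1 : ℝ) ^ k * x ^ k / ((k.factorial : ℝ) * (k.factorial : ℝ))) := by
    refine Summable.of_norm_bounded hsum ?_
    intro k
    rw [Real.norm_eq_abs, abs_div, abs_mul, abs_pow, abs_neg, abs_one, one_pow, one_mul,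
      abs_pow, abs_of_pos (by positivity : (0:ℝ) < (k.factorial : ℝ) * (k.factorial : ℝ))]
    have h2 : |x| ^ k ≤ (2*R) ^ k :=
      pow_le_pow_left₀ (abs_nonneg x) (by linarith) k
    calc |x| ^ k / ((k.factorial:ℝ) * (k.factorial:ℝ))
        ≤ (2*R) ^ k / ((k.factorial:ℝ) * (k.factorial:ℝ)) := by gcongr
      _ ≤ (2*R) ^ k / (k.factorial : ℝ) := by
          have h3 : (k.factorial:ℝ) ≤ (k.factorial:ℝ)*(k.factorial:ℝ) := by
            nlinarith [fact_one_le k]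
          gcongr
  have key : HasDerivAt (fun z => ∑' k : ℕ,
      (-1 : ℝ) ^ k * z ^ k / ((k.factorial : ℝ) * (k.factorial : ℝ)))
      (∑' k : ℕ, (-1 : ℝ) ^ k * ((k:ℝ) * x ^ (k-1)) / ((k.factorial : ℝ) * (k.factorial : ℝ))) x := by
    refine hasDerivAt_tsum_of_isPreconnected hsum Metric.isOpen_ball
      (convex_ball (0:ℝ) R).isPreconnected
      (fun k y _ => hterm k y) (fun k y hy => hbnd k y ?_) hxR hsum0 hxR
    have := Metric.mem_ball.mp hy
    rw [Real.dist_eq, sub_zero] at this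
    exact this.le
  have hsum' : Summable (fun k : ℕ =>
      (-1 : ℝ) ^ k * ((k:ℝ) * x ^ (k-1)) / ((k.factorial : ℝ) * (k.factorial : ℝ))) :=
    Summable.of_norm_bounded hsum (fun k => hbnd k x (by linarith))
  have heq : (∑' k : ℕ, (-1 : ℝ) ^ k * ((k:ℝ) * x ^ (k-1)) / ((k.factorial : ℝ) * (k.factorial : ℝ)))
      = besselW x := by
    rw [Summable.tsum_eq_zero_add hsum']
    simp only [Nat.cast_zero, zero_mul, mul_zero, zero_div, mul_zero, zero_add,
      Nat.cast_ofNat]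
    apply tsum_congr
    intro j
    have hj : (j + 1 : ℕ) - 1 = j := rfl
    rw [hj]
    rw [fact_succ_real]
    have h1 : ((j:ℝ)+1) ≠ 0 := by positivity
    have h2 := fact_one_le j
    have h3 := fact_one_le (j+1)
    push_cast
    field_simp
  rw [← heq]
  exact key

lemma bessel_xW (x : ℝ) : x * besselW x = - besselU x := by
  unfold besselW besselU
  rw [← tsum_mul_left, ← tsum_neg]
  apply tsum_congr
  intro k
  ring

noncomputable def besselA (x : ℝ) : ℝ := x ^ (-(1/4) : ℝ) * besselU x
noncomputable def besselB (x : ℝ) : ℝ :=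
  x ^ ((1/4) : ℝ) * besselV x - (1/4) * (x ^ (-(3/4) : ℝ) * besselU x)
noncomputable def besselE (x : ℝ) : ℝ := besselA x ^ 2 + besselB x ^ 2
noncomputable def besselG (x : ℝ) : ℝ := besselE x * Real.exp ((3/8) * x ^ (-(1/2) : ℝ))

lemma rpow_combine {x : ℝ} (hx : 0 < x) {a b c : ℝ} (h : a + b = c) :
    x ^ a * x ^ b = x ^ c := by rw [← Real.rpow_add hx, h]

lemma rpow_exp_eq (x : ℝ) {a b : ℝ} (h : a = b) : x ^ a = x ^ b := by rw [h]

lemma besselW_eq {x : ℝ} (hx : x ≠ 0) : besselW x = - besselU x / x := by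
  field_simp
  rw [mul_comm]
  exact bessel_xW x

lemma hasDerivAt_besselA {x : ℝ} (hx : 0 < x) :
    HasDerivAt besselA (x ^ (-(1/2) : ℝ) * besselB x) x := by
  have h1 := (Real.hasDerivAt_rpow_const (p := -(1/4)) (Or.inl hx.ne')).mul
    (hasDerivAt_besselU x)
  have c1 : x ^ (-(1/2):ℝ) * x ^ ((1/4):ℝ) = x ^ (-(1/4):ℝ) := rpow_combine hx (by norm_num)
  have c2 : x ^ (-(1/2):ℝ) * x ^ (-(3/4):ℝ) = x ^ (-(1/4)-1:ℝ) := rpow_combine hx (by norm_num)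
  have hEq : -(1/4) * x ^ (-(1/4)-1 : ℝ) * besselU x + x ^ (-(1/4):ℝ) * besselV x
      = x ^ (-(1/2) : ℝ) * besselB x := by
    unfold besselB
    linear_combination -(besselV x) * c1 + (1/4) * besselU x * c2
  exact hEq ▸ h1

lemma hasDerivAt_besselB {x : ℝ} (hx : 0 < x) :
    HasDerivAt besselB (-(x ^ (-(1/2) : ℝ)) * besselA x + (3/16) * x ^ (-(3/2) : ℝ) * besselA x)
      x := by
  have h1 := (Real.hasDerivAt_rpow_const (p := (1/4)) (Or.inl hx.ne')).mul
    (hasDerivAt_besselV x)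
  have h2 := ((Real.hasDerivAt_rpow_const (p := -(3/4)) (Or.inl hx.ne')).mul
    (hasDerivAt_besselU x)).const_mul (1/4 : ℝ)
  have h3 := h1.sub h2
  have c1 : x ^ ((1/4)-1:ℝ) = x ^ (-(3/4):ℝ) := rpow_exp_eq x (by norm_num)
  have c2 : x ^ (-(3/4)-1:ℝ) = x ^ (-(7/4):ℝ) := rpow_exp_eq x (by norm_num)
  have c3 : x ^ (-(1/2):ℝ) * x ^ (-(1/4):ℝ) = x ^ (-(3/4):ℝ) := rpow_combine hx (by norm_num)
  have c4 : x ^ (-(3/2):ℝ) * x ^ (-(1/4):ℝ) = x ^ (-(7/4):ℝ) := rpow_combine hx (by norm_num)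
  have c5 : x ^ ((1/4):ℝ) * x⁻¹ = x ^ (-(3/4):ℝ) := by
    rw [← Real.rpow_neg_one x]; exact rpow_combine hx (by norm_num)
  have hW' : x ^ ((1/4):ℝ) * besselW x = -(x ^ (-(3/4):ℝ)) * besselU x := by
    rw [← c5, besselW_eq hx.ne', div_eq_mul_inv]
    ring
  have hEq : (1/4) * x ^ ((1/4)-1 : ℝ) * besselV x + x ^ ((1/4):ℝ) * besselW x
      - (1/4) * (-(3/4) * x ^ (-(3/4)-1 : ℝ) * besselU x + x ^ (-(3/4):ℝ) * besselV x)
      = -(x ^ (-(1/2) : ℝ)) * besselA x + (3/16) * x ^ (-(3/2) : ℝ) * besselA x := by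
    unfold besselA
    rw [c1, c2]
    linear_combination hW' + besselU x * c3 - (3/16) * besselU x * c4
  exact hEq ▸ h3

lemma hasDerivAt_besselE {x : ℝ} (hx : 0 < x) :
    HasDerivAt besselE ((3/8) * x ^ (-(3/2) : ℝ) * (besselA x * besselB x)) x := by
  have h1 := ((hasDerivAt_besselA hx).pow 2).add ((hasDerivAt_besselB hx).pow 2)
  have hEq : (2:ℕ) * besselA x ^ (2-1) * (x ^ (-(1/2):ℝ) * besselB x)
      + (2:ℕ) * besselB x ^ (2-1) *
        (-(x ^ (-(1/2) : ℝ)) * besselA x + (3/16) * x ^ (-(3/2) : ℝ) * besselA x)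
      = (3/8) * x ^ (-(3/2) : ℝ) * (besselA x * besselB x) := by
    push_cast
    ring
  exact hEq ▸ h1

lemma hasDerivAt_besselG {x : ℝ} (hx : 0 < x) :
    HasDerivAt besselG (-(3/16) * x ^ (-(3/2) : ℝ) * (besselA x - besselB x) ^ 2 *
      Real.exp ((3/8) * x ^ (-(1/2) : ℝ))) x := by
  have hφ := (Real.hasDerivAt_rpow_const (p := -(1/2)) (Or.inl hx.ne')).const_mul (3/8 : ℝ)
  have hexp := hφ.exp
  have h1 := (hasDerivAt_besselE hx).mul hexp
  have c1 : x ^ (-(1/2)-1:ℝ) = x ^ (-(3/2):ℝ) := rpow_exp_eq x (by norm_num)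
  have hEq : (3/8) * x ^ (-(3/2) : ℝ) * (besselA x * besselB x) *
        Real.exp ((3/8) * x ^ (-(1/2) : ℝ))
      + besselE x * (Real.exp ((3/8) * x ^ (-(1/2) : ℝ)) * ((3/8) * (-(1/2) * x ^ (-(1/2)-1:ℝ))))
      = -(3/16) * x ^ (-(3/2) : ℝ) * (besselA x - besselB x) ^ 2 *
          Real.exp ((3/8) * x ^ (-(1/2) : ℝ)) := by
    unfold besselE
    rw [c1]
    ring
  exact hEq ▸ h1

lemma besselG_antitoneOn : AntitoneOn besselG (Ici (1:ℝ)) := by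
  have hdiff : ∀ y ∈ Ici (1:ℝ), HasDerivAt besselG (-(3/16) * y ^ (-(3/2) : ℝ) *
      (besselA y - besselB y) ^ 2 * Real.exp ((3/8) * y ^ (-(1/2) : ℝ))) y :=
    fun y hy => hasDerivAt_besselG (lt_of_lt_of_le one_pos hy)
  apply antitoneOn_of_deriv_nonpos (convex_Ici 1)
  · exact fun y hy => (hdiff y hy).continuousAt.continuousWithinAt
  · intro y hy
    rw [interior_Ici] at hy
    exact ((hdiff y (mem_Ici.mpr (le_of_lt hy))).differentiableAt).differentiableWithinAt
  · intro y hy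
    rw [interior_Ici] at hy
    have hy0 : (0:ℝ) < y := lt_trans one_pos hy
    rw [(hasDerivAt_besselG hy0).deriv]
    have h1 : (0:ℝ) ≤ (3/16) * y ^ (-(3/2) : ℝ) * (besselA y - besselB y) ^ 2 *
        Real.exp ((3/8) * y ^ (-(1/2) : ℝ)) := by positivity
    nlinarith [h1]

lemma besselE_le {x : ℝ} (hx : 1 ≤ x) : besselE x ≤ besselG 1 := by
  have h0 : 0 < x := lt_of_lt_of_le one_pos hx
  have h1 : besselE x ≤ besselG x := by
    have : (1:ℝ) ≤ Real.exp ((3/8) * x ^ (-(1/2) : ℝ)) :=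
      Real.one_le_exp (by positivity)
    have hE : 0 ≤ besselE x := by unfold besselE; positivity
    calc besselE x = besselE x * 1 := by ring
      _ ≤ besselE x * Real.exp ((3/8) * x ^ (-(1/2) : ℝ)) := by
          exact mul_le_mul_of_nonneg_left this hE
      _ = besselG x := rfl
  exact h1.trans (besselG_antitoneOn (mem_Ici.mpr le_rfl) (mem_Ici.mpr hx) hx)

lemma besselG_nonneg : 0 ≤ besselG 1 := by
  unfold besselG besselE
  positivity

lemma besselA_bound {x : ℝ} (hx : 1 ≤ x) : |besselA x| ≤ Real.sqrt (besselG 1) := by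
  have h1 : besselA x ^ 2 ≤ besselG 1 := by
    have := besselE_le hx
    unfold besselE at this
    nlinarith [sq_nonneg (besselB x)]
  calc |besselA x| = Real.sqrt (besselA x ^ 2) := by
        rw [Real.sqrt_sq_eq_abs]
    _ ≤ Real.sqrt (besselG 1) := Real.sqrt_le_sqrt h1

lemma besselB_bound {x : ℝ} (hx : 1 ≤ x) : |besselB x| ≤ Real.sqrt (besselG 1) := by
  have h1 : besselB x ^ 2 ≤ besselG 1 := by
    have := besselE_le hx
    unfold besselE at this
    nlinarith [sq_nonneg (besselA x)]
  calc |besselB x| = Real.sqrt (besselB x ^ 2) := by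
        rw [Real.sqrt_sq_eq_abs]
    _ ≤ Real.sqrt (besselG 1) := Real.sqrt_le_sqrt h1

lemma besselU_bound {x : ℝ} (hx : 1 ≤ x) :
    |besselU x| ≤ Real.sqrt (besselG 1) * x ^ ((1/4) : ℝ) := by
  have h0 : 0 < x := lt_of_lt_of_le one_pos hx
  have c1 : x ^ ((1/4):ℝ) * x ^ (-(1/4):ℝ) = x ^ (0:ℝ) := rpow_combine h0 (by norm_num)
  have hU : besselU x = x ^ ((1/4):ℝ) * besselA x := by
    unfold besselA
    rw [← mul_assoc, c1, Real.rpow_zero, one_mul]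
  rw [hU, abs_mul, abs_of_pos (Real.rpow_pos_of_pos h0 _), mul_comm]
  exact mul_le_mul_of_nonneg_right (besselA_bound hx) (Real.rpow_pos_of_pos h0 _).le

lemma besselV_bound {x : ℝ} (hx : 1 ≤ x) :
    |besselV x| ≤ 2 * Real.sqrt (besselG 1) * x ^ (-(1/4) : ℝ) := by
  have h0 : 0 < x := lt_of_lt_of_le one_pos hx
  set s := Real.sqrt (besselG 1) with hs
  have hs0 : 0 ≤ s := Real.sqrt_nonneg _
  have c1 : x ^ (-(1/4):ℝ) * x ^ ((1/4):ℝ) = x ^ (0:ℝ) := rpow_combine h0 (by norm_num)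
  have c2 : x ^ (-(3/4):ℝ) * x ^ ((1/4):ℝ) = x ^ (-(1/2):ℝ) := rpow_combine h0 (by norm_num)
  have hV : besselV x = x ^ (-(1/4):ℝ) * (x ^ ((1/4):ℝ) * besselV x) := by
    rw [← mul_assoc, c1, Real.rpow_zero, one_mul]
  have hq : |x ^ ((1/4):ℝ) * besselV x| ≤ 2 * s := by
    have hb : x ^ ((1/4):ℝ) * besselV x = besselB x + (1/4) * (x ^ (-(3/4):ℝ) * besselU x) := by
      unfold besselB; ring
    rw [hb]
    have h2 : |x ^ (-(3/4):ℝ) * besselU x| ≤ s := by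
      rw [abs_mul, abs_of_pos (Real.rpow_pos_of_pos h0 _)]
      calc x ^ (-(3/4):ℝ) * |besselU x| ≤ x ^ (-(3/4):ℝ) * (s * x ^ ((1/4):ℝ)) := by
            exact mul_le_mul_of_nonneg_left (besselU_bound hx) (Real.rpow_pos_of_pos h0 _).le
        _ = s * x ^ (-(1/2):ℝ) := by rw [← c2]; ring
        _ ≤ s * 1 := by
            apply mul_le_mul_of_nonneg_left _ hs0
            exact Real.rpow_le_one_of_one_le_of_nonpos hx (by norm_num)
        _ = s := mul_one s
    calc |besselB x + (1/4) * (x ^ (-(3/4):ℝ) * besselU x)|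
        ≤ |besselB x| + (1/4) * |x ^ (-(3/4):ℝ) * besselU x| := by
          calc |besselB x + (1/4) * (x ^ (-(3/4):ℝ) * besselU x)|
              ≤ |besselB x| + |(1/4 : ℝ) * (x ^ (-(3/4):ℝ) * besselU x)| := abs_add_le _ _
            _ = |besselB x| + (1/4) * |x ^ (-(3/4):ℝ) * besselU x| := by
                rw [abs_mul]; norm_num
      _ ≤ s + (1/4) * s := by
          have := besselB_bound hx
          linarith
      _ ≤ 2 * s := by linarith
  rw [hV, abs_mul, abs_of_pos (Real.rpow_pos_of_pos h0 _)]
  calc x ^ (-(1/4):ℝ) * |x ^ ((1/4):ℝ) * besselV x| ≤ x ^ (-(1/4):ℝ) * (2 * s) :=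
        mul_le_mul_of_nonneg_left hq (Real.rpow_pos_of_pos h0 _).le
    _ = 2 * s * x ^ (-(1/4):ℝ) := by ring

lemma besselW_bound {x : ℝ} (hx : 1 ≤ x) :
    |besselW x| ≤ Real.sqrt (besselG 1) * x ^ (-(3/4) : ℝ) := by
  have h0 : 0 < x := lt_of_lt_of_le one_pos hx
  have c1 : x ^ ((1/4):ℝ) * x⁻¹ = x ^ (-(3/4):ℝ) := by
    rw [← Real.rpow_neg_one x]; exact rpow_combine h0 (by norm_num)
  rw [besselW_eq h0.ne']
  rw [abs_div, abs_neg, abs_of_pos h0, div_eq_mul_inv]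
  calc |besselU x| * x⁻¹ ≤ Real.sqrt (besselG 1) * x ^ ((1/4):ℝ) * x⁻¹ :=
        mul_le_mul_of_nonneg_right (besselU_bound hx) (by positivity)
    _ = Real.sqrt (besselG 1) * x ^ (-(3/4):ℝ) := by rw [mul_assoc, c1]

lemma continuous_besselU : Continuous besselU :=
  continuous_iff_continuousAt.mpr fun x => (hasDerivAt_besselU x).continuousAt

lemma continuous_besselV : Continuous besselV :=
  continuous_iff_continuousAt.mpr fun x => (hasDerivAt_besselV x).continuousAt

/-- For `u(x) = Σ_{k≥0} (−1)^k x^{k+1}/(k!(k+1)!) = √x J₁(2√x)`, the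
integrable kernel `(u(x)u′(y) − u′(x)u(y))/(x−y)` equals
`∫₀^∞ u(x+t)u(y+t)/((x+t)(y+t)) dt`. -/
theorem bessel_kernel_hankel_square
    (u : ℝ → ℝ)
    (hu : ∀ x : ℝ, u x = ∑' k : ℕ,
      (-1 : ℝ) ^ k * x ^ (k + 1) / ((k.factorial : ℝ) * ((k + 1).factorial : ℝ))) :
    ∀ x y : ℝ, 0 < x → 0 < y → x ≠ y →
      (u x * deriv u y - deriv u x * u y) / (x - y) =
        ∫ t in Ioi (0 : ℝ), u (x + t) * u (y + t) / ((x + t) * (y + t)) := by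
  obtain rfl : u = besselU := funext hu
  have hdU : deriv besselU = besselV := funext fun z => (hasDerivAt_besselU z).deriv
  rw [hdU]
  intro x y hx hy hxy
  have hxync : x - y ≠ 0 := sub_ne_zero.mpr hxy
  set s : ℝ := Real.sqrt (besselG 1) with hsdef
  have hs2 : s ^ 2 = besselG 1 := Real.sq_sqrt besselG_nonneg
  have hs0 : 0 ≤ s := Real.sqrt_nonneg _
  set h : ℝ → ℝ := fun t => besselU (x + t) * besselU (y + t) / ((x + t) * (y + t)) with hdef
  set K : ℝ → ℝ := fun t =>
    (besselU (x + t) * besselV (y + t) - besselV (x + t) * besselU (y + t)) / (x - y) with hKdef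
  -- derivative of K
  have hK : ∀ t : ℝ, 0 ≤ t → HasDerivAt K (-(h t)) t := by
    intro t ht
    have hxt : 0 < x + t := by linarith
    have hyt : 0 < y + t := by linarith
    have inner : ∀ c : ℝ, HasDerivAt (fun t : ℝ => c + t) 1 t := fun c => by
      simpa using (hasDerivAt_id t).const_add c
    have d1 : HasDerivAt (fun t => besselU (x + t)) (besselV (x + t)) t := by
      simpa [Function.comp_def] using (hasDerivAt_besselU (x + t)).comp t (inner x)
    have d2 : HasDerivAt (fun t => besselU (y + t)) (besselV (y + t)) t := by
      simpa [Function.comp_def] using (hasDerivAt_besselU (y + t)).comp t (inner y)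
    have d3 : HasDerivAt (fun t => besselV (x + t)) (besselW (x + t)) t := by
      simpa [Function.comp_def] using (hasDerivAt_besselV (x + t)).comp t (inner x)
    have d4 : HasDerivAt (fun t => besselV (y + t)) (besselW (y + t)) t := by
      simpa [Function.comp_def] using (hasDerivAt_besselV (y + t)).comp t (inner y)
    have hprod := ((d1.mul d4).sub (d3.mul d2)).div_const (x - y)
    have hEq : (besselV (x + t) * besselV (y + t) + besselU (x + t) * besselW (y + t)
        - (besselW (x + t) * besselU (y + t) + besselV (x + t) * besselV (y + t))) / (x - y)
        = -(h t) := by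
      rw [hdef]
      simp only
      rw [besselW_eq hxt.ne', besselW_eq hyt.ne']
      field_simp
      ring
    exact hEq ▸ hprod
  -- continuity of the integrand
  have hmeas : ContinuousOn h (Ici 0) := by
    apply ContinuousOn.div
    · exact ((continuous_besselU.comp (continuous_const.add continuous_id)).mul
        (continuous_besselU.comp (continuous_const.add continuous_id))).continuousOn
    · exact ((continuous_const.add continuous_id).mul
        (continuous_const.add continuous_id)).continuousOn
    · intro t ht
      have h1 : 0 < x + t := by
        have := mem_Ici.mp ht; linarith
      have h2 : 0 < y + t := by
        have := mem_Ici.mp ht; linarith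
      exact (mul_pos h1 h2).ne'
  -- tail bound
  have htail : ∀ t : ℝ, 1 ≤ t → |h t| ≤ besselG 1 * t ^ (-(3/2) : ℝ) := by
    intro t ht
    have ht0 : (0:ℝ) < t := lt_of_lt_of_le one_pos ht
    have hxt : (1:ℝ) ≤ x + t := by linarith
    have hyt : (1:ℝ) ≤ y + t := by linarith
    have hxt0 : (0:ℝ) < x + t := by linarith
    have hyt0 : (0:ℝ) < y + t := by linarith
    have cx : (x+t) ^ ((1/4):ℝ) * (x+t)⁻¹ = (x+t) ^ (-(3/4):ℝ) := by
      rw [← Real.rpow_neg_one (x+t)]; exact rpow_combine hxt0 (by norm_num)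
    have cy : (y+t) ^ ((1/4):ℝ) * (y+t)⁻¹ = (y+t) ^ (-(3/4):ℝ) := by
      rw [← Real.rpow_neg_one (y+t)]; exact rpow_combine hyt0 (by norm_num)
    have ct : t ^ (-(3/4):ℝ) * t ^ (-(3/4):ℝ) = t ^ (-(3/2):ℝ) := rpow_combine ht0 (by norm_num)
    have hb1 : |besselU (x+t)| ≤ s * (x+t) ^ ((1/4):ℝ) := besselU_bound hxt
    have hb2 : |besselU (y+t)| ≤ s * (y+t) ^ ((1/4):ℝ) := besselU_bound hyt
    have step1 : |h t| ≤ (s * (x+t) ^ ((1/4):ℝ)) * (s * (y+t) ^ ((1/4):ℝ)) / ((x+t) * (y+t)) := by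
      rw [hdef]
      simp only
      rw [abs_div, abs_mul, abs_of_pos (mul_pos hxt0 hyt0)]
      gcongr
    have step2 : (s * (x+t) ^ ((1/4):ℝ)) * (s * (y+t) ^ ((1/4):ℝ)) / ((x+t) * (y+t))
        = s ^ 2 * ((x+t) ^ (-(3/4):ℝ) * (y+t) ^ (-(3/4):ℝ)) := by
      rw [div_eq_mul_inv, mul_inv, ← cx, ← cy]
      ring
    have step3 : s ^ 2 * ((x+t) ^ (-(3/4):ℝ) * (y+t) ^ (-(3/4):ℝ))
        ≤ s ^ 2 * (t ^ (-(3/4):ℝ) * t ^ (-(3/4):ℝ)) := by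
      have e1 : (x+t) ^ (-(3/4):ℝ) ≤ t ^ (-(3/4):ℝ) :=
        Real.rpow_le_rpow_of_nonpos ht0 (by linarith) (by norm_num)
      have e2 : (y+t) ^ (-(3/4):ℝ) ≤ t ^ (-(3/4):ℝ) :=
        Real.rpow_le_rpow_of_nonpos ht0 (by linarith) (by norm_num)
      have p1 : (0:ℝ) ≤ (x+t) ^ (-(3/4):ℝ) := (Real.rpow_pos_of_pos hxt0 _).le
      have p2 : (0:ℝ) ≤ (y+t) ^ (-(3/4):ℝ) := (Real.rpow_pos_of_pos hyt0 _).le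
      have p3 : (0:ℝ) ≤ t ^ (-(3/4):ℝ) := (Real.rpow_pos_of_pos ht0 _).le
      exact mul_le_mul_of_nonneg_left (mul_le_mul e1 e2 p2 p3) (sq_nonneg s)
    calc |h t| ≤ (s * (x+t) ^ ((1/4):ℝ)) * (s * (y+t) ^ ((1/4):ℝ)) / ((x+t) * (y+t)) := step1
      _ = s ^ 2 * ((x+t) ^ (-(3/4):ℝ) * (y+t) ^ (-(3/4):ℝ)) := step2
      _ ≤ s ^ 2 * (t ^ (-(3/4):ℝ) * t ^ (-(3/4):ℝ)) := step3
      _ = besselG 1 * t ^ (-(3/2) : ℝ) := by rw [ct, hs2]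
  -- integrability
  have hintegrable : IntegrableOn h (Ioi (0:ℝ)) := by
    rw [← Ioc_union_Ioi_eq_Ioi (zero_le_one (α := ℝ))]
    apply IntegrableOn.union
    · exact ((hmeas.mono (Icc_subset_Ici_self : Icc (0:ℝ) 1 ⊆ Ici 0)).integrableOn_Icc).mono_set
        Ioc_subset_Icc_self
    · apply Integrable.mono'
        ((integrableOn_Ioi_rpow_of_lt (by norm_num : (-(3/2):ℝ) < -1) one_pos).const_mul
          (besselG 1))
      · exact ((hmeas.mono (fun z hz => le_of_lt (mem_Ioi.mp hz) |> fun h2 =>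
          mem_Ici.mpr (le_trans zero_le_one h2))).aestronglyMeasurable measurableSet_Ioi)
      · refine (ae_restrict_iff' measurableSet_Ioi).mpr (Filter.Eventually.of_forall ?_)
        intro t ht
        simpa [Real.norm_eq_abs] using htail t (le_of_lt (mem_Ioi.mp ht))
  -- FTC on [0, T]
  have hFTC : ∀ T : ℝ, 0 ≤ T → ∫ t in (0:ℝ)..T, h t = K 0 - K T := by
    intro T hT
    have hstep : ∫ t in (0:ℝ)..T, -(h t) = K T - K 0 := by
      apply intervalIntegral.integral_eq_sub_of_hasDerivAt
      · intro t ht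
        rw [uIcc_of_le hT] at ht
        exact hK t ht.1
      · rw [intervalIntegrable_iff_integrableOn_Ioc_of_le hT]
        exact ((hintegrable.mono_set Ioc_subset_Ioi_self).neg)
    rw [intervalIntegral.integral_neg] at hstep
    linarith
  have hlim1 : Filter.Tendsto (fun T => ∫ t in (0:ℝ)..T, h t) Filter.atTop
      (nhds (∫ t in Ioi (0:ℝ), h t)) :=
    MeasureTheory.intervalIntegral_tendsto_integral_Ioi 0 hintegrable Filter.tendsto_id
  -- decay of K at infinity
  have hKlim : Filter.Tendsto K Filter.atTop (nhds 0) := by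
    apply squeeze_zero_norm' (a := fun T => (6 * besselG 1) * T ^ (-(1/2) : ℝ))
    · filter_upwards [Filter.eventually_ge_atTop (max 1 (x + y))] with T hT
      have hT1 : (1:ℝ) ≤ T := le_trans (le_max_left _ _) hT
      have hTxy : x + y ≤ T := le_trans (le_max_right _ _) hT
      have hT0 : (0:ℝ) < T := lt_of_lt_of_le one_pos hT1
      set S : Set ℝ := Icc (min x y + T) (max x y + T) with hSdef
      have hXS : x + T ∈ S := by
        constructor
        · linarith [min_le_left x y]
        · linarith [le_max_left x y]
      have hYS : y + T ∈ S := by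
        constructor
        · linarith [min_le_right x y]
        · linarith [le_max_right x y]
      have hzT : ∀ z ∈ S, T ≤ z := by
        intro z hz
        have := hz.1
        have hm : 0 < min x y := lt_min hx hy
        linarith
      have hz1 : ∀ z ∈ S, (1:ℝ) ≤ z := fun z hz => le_trans hT1 (hzT z hz)
      -- MVT for V
      have hmvtV : ‖besselV (y + T) - besselV (x + T)‖ ≤ (s * T ^ (-(3/4):ℝ)) * ‖(y+T) - (x+T)‖ := by
        apply (convex_Icc _ _).norm_image_sub_le_of_norm_hasDerivWithin_le
          (f' := besselW)
          (fun z hz => (hasDerivAt_besselV z).hasDerivWithinAt) ?_ hXS hYS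
        intro z hz
        rw [Real.norm_eq_abs]
        calc |besselW z| ≤ s * z ^ (-(3/4):ℝ) := besselW_bound (hz1 z hz)
          _ ≤ s * T ^ (-(3/4):ℝ) := by
              apply mul_le_mul_of_nonneg_left _ hs0
              exact Real.rpow_le_rpow_of_nonpos hT0 (hzT z hz) (by norm_num)
      -- MVT for U
      have hmvtU : ‖besselU (x + T) - besselU (y + T)‖
          ≤ (2 * s * T ^ (-(1/4):ℝ)) * ‖(x+T) - (y+T)‖ := by
        apply (convex_Icc _ _).norm_image_sub_le_of_norm_hasDerivWithin_le
          (f' := besselV)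
          (fun z hz => (hasDerivAt_besselU z).hasDerivWithinAt) ?_ hYS hXS
        intro z hz
        rw [Real.norm_eq_abs]
        calc |besselV z| ≤ 2 * s * z ^ (-(1/4):ℝ) := besselV_bound (hz1 z hz)
          _ ≤ 2 * s * T ^ (-(1/4):ℝ) := by
              apply mul_le_mul_of_nonneg_left _ (by positivity)
              exact Real.rpow_le_rpow_of_nonpos hT0 (hzT z hz) (by norm_num)
      have hUX : |besselU (x + T)| ≤ 2 * s * T ^ ((1/4):ℝ) := by
        have h1 : |besselU (x + T)| ≤ s * (x + T) ^ ((1/4):ℝ) :=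
          besselU_bound (le_trans hT1 (by linarith))
        have h2 : (x + T) ^ ((1/4):ℝ) ≤ (2*T) ^ ((1/4):ℝ) :=
          Real.rpow_le_rpow (by linarith) (by linarith) (by norm_num)
        have h3 : (2*T) ^ ((1/4):ℝ) = (2:ℝ) ^ ((1/4):ℝ) * T ^ ((1/4):ℝ) :=
          Real.mul_rpow (by norm_num) hT0.le
        have h4 : (2:ℝ) ^ ((1/4):ℝ) ≤ 2 := by
          calc (2:ℝ) ^ ((1/4):ℝ) ≤ (2:ℝ) ^ (1:ℝ) :=
                Real.rpow_le_rpow_of_exponent_le one_le_two (by norm_num)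
            _ = 2 := Real.rpow_one 2
        calc |besselU (x + T)| ≤ s * (x + T) ^ ((1/4):ℝ) := h1
          _ ≤ s * ((2:ℝ) ^ ((1/4):ℝ) * T ^ ((1/4):ℝ)) := by
              rw [← h3]; exact mul_le_mul_of_nonneg_left h2 hs0
          _ ≤ 2 * s * T ^ ((1/4):ℝ) := by
              have hTp : (0:ℝ) ≤ T ^ ((1/4):ℝ) := (Real.rpow_pos_of_pos hT0 _).le
              calc s * ((2:ℝ) ^ ((1/4):ℝ) * T ^ ((1/4):ℝ))
                  = s * (2:ℝ) ^ ((1/4):ℝ) * T ^ ((1/4):ℝ) := by ring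
                _ ≤ s * 2 * T ^ ((1/4):ℝ) :=
                    mul_le_mul_of_nonneg_right (mul_le_mul_of_nonneg_left h4 hs0) hTp
                _ = 2 * s * T ^ ((1/4):ℝ) := by ring
      have hVX : |besselV (x + T)| ≤ 2 * s * T ^ (-(1/4):ℝ) := by
        have h1 : |besselV (x + T)| ≤ 2 * s * (x + T) ^ (-(1/4):ℝ) :=
          besselV_bound (le_trans hT1 (by linarith))
        have h2 : (x + T) ^ (-(1/4):ℝ) ≤ T ^ (-(1/4):ℝ) :=
          Real.rpow_le_rpow_of_nonpos hT0 (by linarith) (by norm_num)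
        calc |besselV (x + T)| ≤ 2 * s * (x + T) ^ (-(1/4):ℝ) := h1
          _ ≤ 2 * s * T ^ (-(1/4):ℝ) := mul_le_mul_of_nonneg_left h2 (by positivity)
      -- combine
      have c1 : T ^ ((1/4):ℝ) * T ^ (-(3/4):ℝ) = T ^ (-(1/2):ℝ) := rpow_combine hT0 (by norm_num)
      have c2 : T ^ (-(1/4):ℝ) * T ^ (-(1/4):ℝ) = T ^ (-(1/2):ℝ) := rpow_combine hT0 (by norm_num)
      have hN : |besselU (x+T) * besselV (y+T) - besselV (x+T) * besselU (y+T)|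
          ≤ 6 * besselG 1 * T ^ (-(1/2):ℝ) * |x - y| := by
        have hdecomp : besselU (x+T) * besselV (y+T) - besselV (x+T) * besselU (y+T)
            = besselU (x+T) * (besselV (y+T) - besselV (x+T))
              + besselV (x+T) * (besselU (x+T) - besselU (y+T)) := by ring
        rw [hdecomp]
        have habs1 : |(y+T) - (x+T)| = |x - y| := by
          rw [show (y+T) - (x+T) = -(x - y) by ring, abs_neg]
        have habs2 : |(x+T) - (y+T)| = |x - y| := by
          rw [show (x+T) - (y+T) = (x - y) by ring]
        rw [Real.norm_eq_abs, Real.norm_eq_abs, habs1] at hmvtV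
        rw [Real.norm_eq_abs, Real.norm_eq_abs, habs2] at hmvtU
        have t1 : |besselU (x+T) * (besselV (y+T) - besselV (x+T))|
            ≤ (2 * s * T ^ ((1/4):ℝ)) * ((s * T ^ (-(3/4):ℝ)) * |x - y|) := by
          rw [abs_mul]
          exact mul_le_mul hUX hmvtV (abs_nonneg _) (by positivity)
        have t2 : |besselV (x+T) * (besselU (x+T) - besselU (y+T))|
            ≤ (2 * s * T ^ (-(1/4):ℝ)) * ((2 * s * T ^ (-(1/4):ℝ)) * |x - y|) := by
          rw [abs_mul]
          exact mul_le_mul hVX hmvtU (abs_nonneg _) (by positivity)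
        calc |besselU (x+T) * (besselV (y+T) - besselV (x+T))
              + besselV (x+T) * (besselU (x+T) - besselU (y+T))|
            ≤ |besselU (x+T) * (besselV (y+T) - besselV (x+T))|
              + |besselV (x+T) * (besselU (x+T) - besselU (y+T))| := abs_add_le _ _
          _ ≤ (2 * s * T ^ ((1/4):ℝ)) * ((s * T ^ (-(3/4):ℝ)) * |x - y|)
              + (2 * s * T ^ (-(1/4):ℝ)) * ((2 * s * T ^ (-(1/4):ℝ)) * |x - y|) := by
              linarith
          _ = (2 * (T ^ ((1/4):ℝ) * T ^ (-(3/4):ℝ)) + 4 * (T ^ (-(1/4):ℝ) * T ^ (-(1/4):ℝ)))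
                * s ^ 2 * |x - y| := by ring
          _ = 6 * besselG 1 * T ^ (-(1/2):ℝ) * |x - y| := by rw [c1, c2, hs2]; ring
      rw [hKdef]
      simp only [Real.norm_eq_abs]
      rw [abs_div]
      rw [div_le_iff₀ (abs_pos.mpr hxync)]
      calc |besselU (x+T) * besselV (y+T) - besselV (x+T) * besselU (y+T)|
          ≤ 6 * besselG 1 * T ^ (-(1/2):ℝ) * |x - y| := hN
        _ = 6 * besselG 1 * T ^ (-(1/2) : ℝ) * |x - y| := rfl
    · have hb : Filter.Tendsto (fun T : ℝ => T ^ (-(1/2) : ℝ)) Filter.atTop (nhds 0) :=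
        tendsto_rpow_neg_atTop (by norm_num)
      have := hb.const_mul (6 * besselG 1)
      simpa using this
  -- assemble
  have hlim2 : Filter.Tendsto (fun T => ∫ t in (0:ℝ)..T, h t) Filter.atTop (nhds (K 0 - 0)) := by
    apply Filter.Tendsto.congr' _ (tendsto_const_nhds.sub hKlim)
    filter_upwards [Filter.eventually_ge_atTop (0:ℝ)] with T hT
    exact (hFTC T hT).symm
  have hfinal : ∫ t in Ioi (0:ℝ), h t = K 0 := by
    have := tendsto_nhds_unique hlim1 hlim2
    simpa using this
  rw [hdef] at hfinal
  rw [hfinal, hKdef]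
  simp
end

section
/- For a nonnegative integer n let φ_n(x) = (n!)^{−1/2} (2π)^{−1/4} (−1)^n e^{x²/4} · dⁿ/dxⁿ ( e^{−x²/2} ) be the n-th Hermite function, and define H(x,y) = ( φ_n(x) φ_n′(y) − φ_n′(x) φ_n(y) )/(x−y) for x ≠ y. Then for all real x ≠ y the derivative d/ds H(x+s, y+s) at s = 0 exists and equals −( (x+y)/4 ) φ_n(x) φ_n(y). -/
open Real Polynomial

lemma derivative_hermite_succ' (n : ℕ) :
    derivative (hermite (n + 1)) = (n + 1 : ℤ) • hermite n := by
  induction n with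
  | zero => simp [hermite_succ, hermite_zero]
  | succ n ih =>
      rw [hermite_succ (n+1), derivative_sub, derivative_mul, derivative_X, ih,
        derivative_smul, hermite_succ n]
      simp only [smul_eq_C_mul]
      push_cast
      simp only [C_add, C_1]
      ring

lemma hermite_ode' (n : ℕ) :
    derivative (derivative (hermite n)) - X * derivative (hermite n)
      + (n : ℤ) • hermite n = 0 := by
  cases n with
  | zero => simp [hermite_zero]
  | succ n =>
      rw [derivative_hermite_succ', derivative_smul]
      have h : derivative (hermite n) = X * hermite n - hermite (n+1) := by
        rw [hermite_succ]; ring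
      rw [h]
      simp only [smul_eq_C_mul]
      push_cast
      simp only [C_add, C_1]
      ring

lemma hermite_ode_eval (n : ℕ) (x : ℝ) :
    aeval x (derivative (derivative (hermite n)))
      = x * aeval x (derivative (hermite n)) - n * aeval x (hermite n) := by
  have h := congrArg (aeval x : ℤ[X] →ₐ[ℤ] ℝ) (hermite_ode' n)
  simp only [map_add, map_sub, map_mul, aeval_X, map_zero, map_zsmul, zsmul_eq_mul, map_intCast, map_natCast, Int.cast_natCast] at h
  linarith

/-- For the n-th Hermite function `φₙ`, the kernel
`H(x,y) = (φₙ(x)φₙ′(y) − φₙ′(x)φₙ(y))/(x−y)` has diagonal-direction derivative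
`(∂/∂x + ∂/∂y)H(x,y) = −((x+y)/4) φₙ(x)φₙ(y)`. -/
theorem hermite_kernel_diagonal_derivative
    (n : ℕ) (φ : ℝ → ℝ)
    (hφ : ∀ x : ℝ, φ x = ((n.factorial : ℝ)) ^ (-(1 / 2 : ℝ)) *
      (2 * Real.pi) ^ (-(1 / 4 : ℝ)) * (-1 : ℝ) ^ n * Real.exp (x ^ 2 / 4) *
        iteratedDeriv n (fun t : ℝ => Real.exp (-t ^ 2 / 2)) x)
    (H : ℝ → ℝ → ℝ)
    (hH : ∀ x y : ℝ, x ≠ y →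
      H x y = (φ x * deriv φ y - deriv φ x * φ y) / (x - y)) :
    ∀ x y : ℝ, x ≠ y →
      HasDerivAt (fun s => H (x + s) (y + s)) (-((x + y) / 4) * (φ x * φ y)) 0 := by
  set c : ℝ := ((n.factorial : ℝ)) ^ (-(1 / 2 : ℝ)) * (2 * Real.pi) ^ (-(1 / 4 : ℝ)) with hc
  set q : ℤ[X] := hermite n with hq
  -- rewrite φ in terms of the Hermite polynomial
  have hφq : ∀ x : ℝ, φ x = c * aeval x q * Real.exp (-(x ^ 2 / 4)) := by
    intro x
    have hg : (fun t : ℝ => Real.exp (-t ^ 2 / 2)) = fun y : ℝ => Real.exp (-(y ^ 2 / 2)) := by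
      funext t; ring_nf
    rw [hφ x, iteratedDeriv_eq_iterate, hg,
      Polynomial.deriv_gaussian_eq_hermite_mul_gaussian]
    have h1 : ((-1 : ℝ) ^ n) * ((-1 : ℝ) ^ n) = 1 := by
      rw [← pow_add]; exact (neg_one_pow_eq_one_iff_even (by norm_num)).mpr ⟨n, by ring⟩
    have h2 : Real.exp (x ^ 2 / 4) * Real.exp (-(x ^ 2 / 2)) = Real.exp (-(x ^ 2 / 4)) := by
      rw [← Real.exp_add]; ring_nf
    calc c * (-1 : ℝ) ^ n * Real.exp (x ^ 2 / 4) *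
          ((-1 : ℝ) ^ n * aeval x q * Real.exp (-(x ^ 2 / 2)))
        = c * aeval x q * (((-1 : ℝ) ^ n) * ((-1 : ℝ) ^ n)) *
            (Real.exp (x ^ 2 / 4) * Real.exp (-(x ^ 2 / 2))) := by ring
      _ = c * aeval x q * Real.exp (-(x ^ 2 / 4)) := by rw [h1, h2]; ring
  -- exponential factor derivative
  have hE : ∀ x : ℝ, HasDerivAt (fun t : ℝ => Real.exp (-(t ^ 2 / 4)))
      (-(x / 2) * Real.exp (-(x ^ 2 / 4))) x := by
    intro x
    have h1 : HasDerivAt (fun t : ℝ => -(t ^ 2 / 4)) (-(x / 2)) x := by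
      have := ((hasDerivAt_pow 2 x).div_const 4).neg
      refine this.congr_deriv ?_; ring
    simpa [mul_comm] using h1.exp
  -- first derivative of φ
  set D : ℝ → ℝ := fun x => c * (aeval x (derivative q) - x / 2 * aeval x q) *
      Real.exp (-(x ^ 2 / 4)) with hD
  have hφD : ∀ x : ℝ, HasDerivAt φ (D x) x := by
    intro x
    have hfun : φ = fun x => c * aeval x q * Real.exp (-(x ^ 2 / 4)) := funext hφq
    rw [hfun]
    have h1 : HasDerivAt (fun x : ℝ => c * aeval x q) (c * aeval x (derivative q)) x :=
      (q.hasDerivAt_aeval x).const_mul c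
    have := h1.mul (hE x)
    refine this.congr_deriv ?_
    simp only [hD]; ring
  have hderiv : deriv φ = D := funext fun x => (hφD x).deriv
  -- second derivative of φ
  set E : ℝ → ℝ := fun x => (x ^ 2 / 4 - n - 1 / 2) * φ x with hEdef
  have hDE : ∀ x : ℝ, HasDerivAt D (E x) x := by
    intro x
    have hP : HasDerivAt (fun x : ℝ => c * (aeval x (derivative q) - x / 2 * aeval x q))
        (c * (aeval x (derivative (derivative q))
          - (1 / 2 * aeval x q + x / 2 * aeval x (derivative q)))) x := by
      exact (((derivative q).hasDerivAt_aeval x).sub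
        (((hasDerivAt_id x).div_const 2).mul (q.hasDerivAt_aeval x))).const_mul c
    have := hP.mul (hE x)
    refine this.congr_deriv ?_
    simp only [hEdef, hφq x, hq]
    rw [hermite_ode_eval n x]
    ring
  -- main computation
  intro x y hxy
  have hne : x - y ≠ 0 := sub_ne_zero.mpr hxy
  have hfun : (fun s => H (x + s) (y + s))
      = fun s => (φ (x + s) * D (y + s) - D (x + s) * φ (y + s)) / (x - y) := by
    funext s
    rw [hH (x + s) (y + s) (fun h => hxy (by linarith)), hderiv]
    have : x + s - (y + s) = x - y := by ring
    rw [this]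
  rw [hfun]
  have hadd : ∀ a : ℝ, HasDerivAt (fun s : ℝ => a + s) 1 0 := fun a =>
    (hasDerivAt_id 0).const_add a
  have h1 : HasDerivAt (fun s => φ (x + s)) (D x) 0 := by
    simpa [Function.comp_def] using (hφD (x + 0)).comp 0 (hadd x)
  have h2 : HasDerivAt (fun s => φ (y + s)) (D y) 0 := by
    simpa [Function.comp_def] using (hφD (y + 0)).comp 0 (hadd y)
  have h3 : HasDerivAt (fun s => D (x + s)) (E x) 0 := by
    simpa [Function.comp_def] using (hDE (x + 0)).comp 0 (hadd x)
  have h4 : HasDerivAt (fun s => D (y + s)) (E y) 0 := by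
    simpa [Function.comp_def] using (hDE (y + 0)).comp 0 (hadd y)
  have := ((h1.mul h4).sub (h3.mul h2)).div_const (x - y)
  refine this.congr_deriv ?_
  simp only [hEdef]
  field_simp
  ring
end

section
/- Let n ≥ 1, let α ∈ ℝ, and let Ω_1, Ω_0, Ω_{−1} be real symmetric 2n×2n matrices with Ω_1 positive semidefinite and −Ω_{−1} positive semidefinite. Let J be the 2n×2n real block matrix [[0, −I_n],[I_n, 0]]. Suppose v : (1,∞) → ℝ^{2n} is differentiable and satisfies x v′(x) = J ( x Ω_1 + Ω_0 + α J + x^{−1} Ω_{−1} ) v(x) for all x > 1; that the functions x ↦ x^{α} v(x) and x ↦ x^{α−1} v(x) are bounded and square-integrable on (1,∞) with respect to dx; and that ‖x^{α} v(x)‖ → 0 as x → ∞. Then for all x, y > 1 with x ≠ y: (xy)^{(2α+1)/2} ⟨J v(x), v(y)⟩/(x−y) = ∫_1^∞ [ t^{2α} (xy)^{(2α+1)/2} ⟨Ω_1 v(tx), v(ty)⟩ − t^{2α−2} (xy)^{(2α−1)/2} ⟨Ω_{−1} v(tx), v(ty)⟩ ] dt. -/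
open Matrix MeasureTheory Set Filter Real

private lemma coord_le' {ι : Type*} [Fintype ι] (a : EuclideanSpace ℝ ι) (i : ι) :
    |a i| ≤ ‖a‖ := by
  rw [EuclideanSpace.norm_eq, ← Real.sqrt_sq_eq_abs]
  apply Real.sqrt_le_sqrt
  have := Finset.single_le_sum (f := fun j => ‖a j‖^2) (fun j _ => by positivity)
    (Finset.mem_univ i)
  simpa only [Real.norm_eq_abs, sq_abs] using this

private lemma dot_bound' {ι : Type*} [Fintype ι] (M : Matrix ι ι ℝ) (a b : EuclideanSpace ℝ ι) :
    |M.mulVec a ⬝ᵥ b| ≤ (∑ i, ∑ j, |M i j|) * (‖a‖ * ‖b‖) := by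
  have h0a : (0:ℝ) ≤ ‖a‖ := norm_nonneg _
  calc |M.mulVec a ⬝ᵥ b| = |∑ i, (∑ j, M i j * a j) * b i| := by
        simp [dotProduct, Matrix.mulVec]
    _ ≤ ∑ i, |(∑ j, M i j * a j) * b i| := Finset.abs_sum_le_sum_abs _ _
    _ ≤ ∑ i, ∑ j, |M i j| * (‖a‖ * ‖b‖) := by
        apply Finset.sum_le_sum
        intro i _
        rw [abs_mul]
        calc |∑ j, M i j * a j| * |b i| ≤ (∑ j, |M i j * a j|) * |b i| :=
              mul_le_mul_of_nonneg_right (Finset.abs_sum_le_sum_abs _ _) (abs_nonneg _)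
          _ = ∑ j, |M i j * a j| * |b i| := by rw [Finset.sum_mul]
          _ ≤ ∑ j, |M i j| * (‖a‖ * ‖b‖) := by
              apply Finset.sum_le_sum
              intro j _
              rw [abs_mul, mul_assoc]
              refine mul_le_mul_of_nonneg_left ?_ (abs_nonneg _)
              exact mul_le_mul (coord_le' a j) (coord_le' b i) (abs_nonneg _) h0a
    _ = (∑ i, ∑ j, |M i j|) * (‖a‖ * ‖b‖) := by rw [Finset.sum_mul]; simp [Finset.sum_mul]

private lemma hasDerivAt_dot' {ι : Type*} [Fintype ι] (M : Matrix ι ι ℝ)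
    (v : ℝ → EuclideanSpace ℝ ι) (x y t : ℝ) (Vx Vy : EuclideanSpace ℝ ι)
    (hvx : HasDerivAt v Vx (t * x)) (hvy : HasDerivAt v Vy (t * y)) :
    HasDerivAt (fun t => M.mulVec (v (t * x)) ⬝ᵥ v (t * y))
      (M.mulVec (x • Vx) ⬝ᵥ v (t * y) + M.mulVec (v (t * x)) ⬝ᵥ (y • Vy)) t := by
  have hax : HasDerivAt (fun t : ℝ => v (t * x)) (x • Vx) t := by
    exact hvx.scomp t (hasDerivAt_mul_const x)
  have hay : HasDerivAt (fun t : ℝ => v (t * y)) (y • Vy) t := by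
    exact hvy.scomp t (hasDerivAt_mul_const y)
  have coordx : ∀ i, HasDerivAt (fun t : ℝ => v (t * x) i) ((x • Vx) i) t := fun i =>
    (EuclideanSpace.proj (𝕜 := ℝ) i).hasFDerivAt.comp_hasDerivAt t hax
  have coordy : ∀ i, HasDerivAt (fun t : ℝ => v (t * y) i) ((y • Vy) i) t := fun i =>
    (EuclideanSpace.proj (𝕜 := ℝ) i).hasFDerivAt.comp_hasDerivAt t hay
  have rowx : ∀ i, HasDerivAt (fun t : ℝ => ∑ j, M i j * v (t * x) j)
      (∑ j, M i j * (x • Vx) j) t := fun i =>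
    HasDerivAt.fun_sum (fun j _ => (coordx j).const_mul (M i j))
  have key : HasDerivAt (fun t : ℝ => ∑ i, (∑ j, M i j * v (t * x) j) * v (t * y) i)
      (∑ i, ((∑ j, M i j * (x • Vx) j) * v (t * y) i
            + (∑ j, M i j * v (t * x) j) * (y • Vy) i)) t :=
    HasDerivAt.fun_sum (fun i _ => (rowx i).mul (coordy i))
  convert key using 1
  all_goals simp [dotProduct, Matrix.mulVec, Finset.sum_add_distrib]

private lemma key_alg' {n : ℕ} (α x y t : ℝ)
    (Ω₁ Ω₀ Ωₘ J : Matrix (Fin n ⊕ Fin n) (Fin n ⊕ Fin n) ℝ)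
    (hΩ₁symm : Ω₁.IsSymm) (hΩ₀symm : Ω₀.IsSymm) (hΩₘsymm : Ωₘ.IsSymm)
    (hJ : J = Matrix.fromBlocks 0 (-1) 1 0)
    (a b : EuclideanSpace ℝ (Fin n ⊕ Fin n)) (hx : x ≠ 0) (hy : y ≠ 0) (ht : t ≠ 0) :
    J.mulVec (x • ((t*x)⁻¹ • J.mulVec (((t*x) • Ω₁ + Ω₀ + α • J + (t*x)⁻¹ • Ωₘ).mulVec a))) ⬝ᵥ b
      + J.mulVec a ⬝ᵥ (y • ((t*y)⁻¹ • J.mulVec (((t*y) • Ω₁ + Ω₀ + α • J + (t*y)⁻¹ • Ωₘ).mulVec b)))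
    = (y - x) * (Ω₁.mulVec a ⬝ᵥ b) - (2*α) * t⁻¹ * (J.mulVec a ⬝ᵥ b)
      + (x - y)/(x*y) * (t⁻¹ * t⁻¹) * (Ωₘ.mulVec a ⬝ᵥ b) := by
  have hJT : Jᵀ = -J := by
    subst hJ
    rw [Matrix.fromBlocks_transpose, Matrix.fromBlocks_neg]
    simp
  have hJJ : J * J = -1 := by
    subst hJ
    rw [Matrix.fromBlocks_multiply, ← Matrix.fromBlocks_one, Matrix.fromBlocks_neg]
    simp
  have h1 : ∀ w : (Fin n ⊕ Fin n) → ℝ, J.mulVec (J.mulVec w) = -w := by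
    intro w; rw [Matrix.mulVec_mulVec, hJJ, Matrix.neg_mulVec, Matrix.one_mulVec]
  have h3 : ∀ (Ω : Matrix (Fin n ⊕ Fin n) (Fin n ⊕ Fin n) ℝ), Ω.IsSymm →
      ∀ c d : (Fin n ⊕ Fin n) → ℝ, c ⬝ᵥ Ω.mulVec d = Ω.mulVec c ⬝ᵥ d := by
    intro Ω hΩ c d
    rw [Matrix.dotProduct_mulVec, ← Matrix.mulVec_transpose, hΩ.eq]
  have h2 : ∀ c d : (Fin n ⊕ Fin n) → ℝ, (J.mulVec c) ⬝ᵥ (J.mulVec d) = c ⬝ᵥ d := by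
    intro c d
    rw [Matrix.dotProduct_mulVec, ← Matrix.mulVec_transpose, hJT, Matrix.neg_mulVec, h1,
      neg_neg]
  have h4 : ∀ c d : (Fin n ⊕ Fin n) → ℝ, c ⬝ᵥ J.mulVec d = -(J.mulVec c ⬝ᵥ d) := by
    intro c d
    rw [Matrix.dotProduct_mulVec, ← Matrix.mulVec_transpose, hJT, Matrix.neg_mulVec,
      neg_dotProduct]
  have hxt : x * (t*x)⁻¹ = t⁻¹ := by field_simp
  have hyt : y * (t*y)⁻¹ = t⁻¹ := by field_simp
  have T1 : J.mulVec (x • ((t*x)⁻¹ • J.mulVec (((t*x) • Ω₁ + Ω₀ + α • J + (t*x)⁻¹ • Ωₘ).mulVec a))) ⬝ᵥ b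
      = -(t⁻¹ * ((t*x) * (Ω₁.mulVec a ⬝ᵥ b) + (Ω₀.mulVec a ⬝ᵥ b) + α * (J.mulVec a ⬝ᵥ b)
          + (t*x)⁻¹ * (Ωₘ.mulVec a ⬝ᵥ b))) := by
    rw [smul_smul, hxt, Matrix.mulVec_smul, h1]
    simp only [smul_dotProduct, neg_dotProduct, Matrix.add_mulVec,
      Matrix.smul_mulVec, add_dotProduct, smul_eq_mul]
    ring
  have T2 : J.mulVec a ⬝ᵥ (y • ((t*y)⁻¹ • J.mulVec (((t*y) • Ω₁ + Ω₀ + α • J + (t*y)⁻¹ • Ωₘ).mulVec b)))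
      = t⁻¹ * ((t*y) * (Ω₁.mulVec a ⬝ᵥ b) + (Ω₀.mulVec a ⬝ᵥ b) - α * (J.mulVec a ⬝ᵥ b)
          + (t*y)⁻¹ * (Ωₘ.mulVec a ⬝ᵥ b)) := by
    rw [smul_smul, hyt, dotProduct_smul, h2]
    simp only [Matrix.add_mulVec, Matrix.smul_mulVec, dotProduct_add,
      dotProduct_smul, smul_eq_mul, h3 Ω₁ hΩ₁symm, h3 Ω₀ hΩ₀symm, h3 Ωₘ hΩₘsymm,
      h4]
    ring
  rw [T1, T2]
  field_simp
  ring

set_option maxHeartbeats 1000000 in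
/-- Factorization of the kernel
`(xy)^{(2α+1)/2}⟨J v(x), v(y)⟩/(x−y)` arising from the differential equation
`x v′(x) = J(xΩ₁ + Ω₀ + αJ + x⁻¹Ω₋₁)v(x)` on `(1,∞)`, with `Ω₁ ⪰ 0`, `−Ω₋₁ ⪰ 0`,
as the kernel of `Γ_ψ*Γ_ψ` for a multiplicative Hankel operator. -/
theorem integrable_kernel_multiplicative_hankel_factorization
    (n : ℕ) (hn : 1 ≤ n) (α : ℝ)
    (Ω₁ Ω₀ Ωₘ : Matrix (Fin n ⊕ Fin n) (Fin n ⊕ Fin n) ℝ)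
    (hΩ₁symm : Ω₁.IsSymm) (hΩ₀symm : Ω₀.IsSymm) (hΩₘsymm : Ωₘ.IsSymm)
    (hΩ₁pos : Ω₁.PosSemidef) (hΩₘneg : (-Ωₘ).PosSemidef)
    (J : Matrix (Fin n ⊕ Fin n) (Fin n ⊕ Fin n) ℝ)
    (hJ : J = Matrix.fromBlocks 0 (-1) 1 0)
    (v : ℝ → EuclideanSpace ℝ (Fin n ⊕ Fin n))
    (hode : ∀ x : ℝ, 1 < x →
      HasDerivAt v
        (WithLp.toLp 2 (x⁻¹ • (J.mulVec ((x • Ω₁ + Ω₀ + α • J + x⁻¹ • Ωₘ).mulVec (v x))))) x)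
    (hbdd : ∃ C : ℝ, ∀ x : ℝ, 1 < x → ‖x ^ α • v x‖ ≤ C)
    (hbdd' : ∃ C : ℝ, ∀ x : ℝ, 1 < x → ‖x ^ (α - 1) • v x‖ ≤ C)
    (hL2 : IntegrableOn (fun x : ℝ => ‖x ^ α • v x‖ ^ 2) (Ioi (1 : ℝ)))
    (hL2' : IntegrableOn (fun x : ℝ => ‖x ^ (α - 1) • v x‖ ^ 2) (Ioi (1 : ℝ)))
    (hdecay : Tendsto (fun x : ℝ => ‖x ^ α • v x‖) atTop (nhds 0)) :
    ∀ x y : ℝ, 1 < x → 1 < y → x ≠ y →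
      (x * y) ^ ((2 * α + 1) / 2) * ((J.mulVec (v x)) ⬝ᵥ (v y)) / (x - y) =
        ∫ t in Ioi (1 : ℝ),
          (t ^ (2 * α) * (x * y) ^ ((2 * α + 1) / 2) *
              ((Ω₁.mulVec (v (t * x))) ⬝ᵥ (v (t * y)))
            - t ^ (2 * α - 2) * (x * y) ^ ((2 * α - 1) / 2) *
              ((Ωₘ.mulVec (v (t * x))) ⬝ᵥ (v (t * y)))) := by
  intro x y hx hy hxy
  have hx0 : (0:ℝ) < x := lt_trans one_pos hx
  have hy0 : (0:ℝ) < y := lt_trans one_pos hy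
  have hxy0 : (0:ℝ) < x * y := mul_pos hx0 hy0
  have hxmy : x - y ≠ 0 := sub_ne_zero.mpr hxy
  -- abbreviations
  set f1 : ℝ → ℝ := fun t => t ^ (2*α) * (Ω₁.mulVec (v (t*x)) ⬝ᵥ v (t*y)) with hf1def
  set f2 : ℝ → ℝ := fun t => t ^ (2*α) * t⁻¹ * t⁻¹ * (Ωₘ.mulVec (v (t*x)) ⬝ᵥ v (t*y)) with hf2def
  set g : ℝ → ℝ := fun t => t ^ (2*α) * (J.mulVec (v (t*x)) ⬝ᵥ v (t*y)) with hgdef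
  set g' : ℝ → ℝ := fun t => (y - x) * f1 t + ((x - y)/(x*y)) * f2 t with hg'def
  have htx : ∀ t : ℝ, 1 ≤ t → 1 < t * x := fun t h => by nlinarith
  have hty : ∀ t : ℝ, 1 ≤ t → 1 < t * y := fun t h => by nlinarith
  -- derivative
  have hderiv : ∀ t : ℝ, 1 ≤ t → HasDerivAt g (g' t) t := by
    intro t ht
    have ht0 : (0:ℝ) < t := lt_of_lt_of_le one_pos ht
    have hvx := hode (t*x) (htx t ht)
    have hvy := hode (t*y) (hty t ht)
    have hu := hasDerivAt_dot' J v x y t _ _ hvx hvy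
    have hpow : HasDerivAt (fun s : ℝ => s ^ (2*α)) ((2*α) * t ^ (2*α - 1)) t :=
      Real.hasDerivAt_rpow_const (Or.inl ht0.ne')
    have hprod := hpow.mul hu
    refine HasDerivAt.congr_deriv (f := g) hprod ?_
    symm
    simp only [WithLp.ofLp_toLp]
    rw [key_alg' α x y t Ω₁ Ω₀ Ωₘ J hΩ₁symm hΩ₀symm hΩₘsymm hJ (v (t*x)) (v (t*y))
      hx0.ne' hy0.ne' ht0.ne']
    have e1 : t ^ (2*α - 1) = t ^ (2*α) * t⁻¹ := by
      rw [Real.rpow_sub ht0, Real.rpow_one, div_eq_mul_inv]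
    rw [hg'def, hf1def, hf2def, e1]
    ring
  -- continuity of the Φ functions
  have hΦder : ∀ (M : Matrix (Fin n ⊕ Fin n) (Fin n ⊕ Fin n) ℝ) (t : ℝ), 1 ≤ t →
      ContinuousAt (fun t : ℝ => M.mulVec (v (t*x)) ⬝ᵥ v (t*y)) t := by
    intro M t ht
    exact (hasDerivAt_dot' M v x y t _ _ (hode _ (htx t ht)) (hode _ (hty t ht))).continuousAt
  -- norm product identities
  have hPQ : ∀ (β : ℝ) (t : ℝ), 0 < t →
      ‖(t*x) ^ β • v (t*x)‖ * ‖(t*y) ^ β • v (t*y)‖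
        = (x*y) ^ β * (t ^ (2*β) * (‖v (t*x)‖ * ‖v (t*y)‖)) := by
    intro β t ht0
    rw [norm_smul, norm_smul]
    rw [Real.norm_eq_abs, Real.norm_eq_abs,
      abs_of_pos (Real.rpow_pos_of_pos (mul_pos ht0 hx0) β),
      abs_of_pos (Real.rpow_pos_of_pos (mul_pos ht0 hy0) β),
      Real.mul_rpow ht0.le hx0.le, Real.mul_rpow ht0.le hy0.le,
      Real.mul_rpow hx0.le hy0.le]
    have : t ^ β * t ^ β = t ^ (2*β) := by
      rw [← Real.rpow_add ht0]; ring_nf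
    linear_combination (x ^ β * y ^ β * ‖v (t*x)‖ * ‖v (t*y)‖) * this
  -- squared-norm integrability after scaling
  have hsq : ∀ β : ℝ, IntegrableOn (fun s : ℝ => ‖s ^ β • v s‖^2) (Ioi 1) →
      IntegrableOn (fun t : ℝ => ‖(t*x) ^ β • v (t*x)‖^2 + ‖(t*y) ^ β • v (t*y)‖^2)
        (Ioi 1) := by
    intro β h
    have hxpart : IntegrableOn (fun t : ℝ => ‖(t*x) ^ β • v (t*x)‖^2) (Ioi 1) := by
      refine (integrableOn_Ioi_comp_mul_right_iff (fun s : ℝ => ‖s ^ β • v s‖^2) 1 hx0).mpr ?_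
      exact h.mono_set (Ioi_subset_Ioi (by linarith))
    have hypart : IntegrableOn (fun t : ℝ => ‖(t*y) ^ β • v (t*y)‖^2) (Ioi 1) := by
      refine (integrableOn_Ioi_comp_mul_right_iff (fun s : ℝ => ‖s ^ β • v s‖^2) 1 hy0).mpr ?_
      exact h.mono_set (Ioi_subset_Ioi (by linarith))
    exact hxpart.add hypart
  -- generic integrability of weighted dot-product kernels
  have hInt : ∀ (M : Matrix (Fin n ⊕ Fin n) (Fin n ⊕ Fin n) ℝ) (β : ℝ),
      IntegrableOn (fun s : ℝ => ‖s ^ β • v s‖^2) (Ioi 1) →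
      IntegrableOn (fun t : ℝ => t ^ (2*β) * (M.mulVec (v (t*x)) ⬝ᵥ v (t*y))) (Ioi 1) := by
    intro M β hsqβ
    set K : ℝ := ∑ i, ∑ j, |M i j| with hKdef
    have hK : 0 ≤ K := by positivity
    have hmaj := (hsq β hsqβ).const_mul (K * (x*y) ^ (-β) / 2)
    refine Integrable.mono' hmaj ?_ ?_
    · refine ContinuousOn.aestronglyMeasurable ?_ measurableSet_Ioi
      refine ContinuousOn.mul ?_ ?_
      · intro t ht
        exact (Real.continuousAt_rpow_const t (2*β)
          (Or.inl (ne_of_gt (lt_trans one_pos ht)))).continuousWithinAt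
      · intro t ht
        exact (hΦder M t (le_of_lt ht)).continuousWithinAt
    · rw [ae_restrict_iff' measurableSet_Ioi]
      refine Eventually.of_forall ?_
      intro t ht
      have ht0 : (0:ℝ) < t := lt_trans one_pos ht
      have hrp : (0:ℝ) < t ^ (2*β) := Real.rpow_pos_of_pos ht0 _
      set P : ℝ := ‖(t*x) ^ β • v (t*x)‖ with hPdef
      set Q : ℝ := ‖(t*y) ^ β • v (t*y)‖ with hQdef
      have hc : (x*y) ^ (-β) * (x*y) ^ β = 1 := by
        rw [← Real.rpow_add hxy0]; simp
      have hXX : t ^ (2*β) * (‖v (t*x)‖ * ‖v (t*y)‖) = (x*y) ^ (-β) * (P * Q) := by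
        rw [hPdef, hQdef, hPQ β t ht0]
        linear_combination (-(t ^ (2*β) * (‖v (t*x)‖ * ‖v (t*y)‖))) * hc
      have hdot := dot_bound' M (v (t*x)) (v (t*y))
      calc ‖t ^ (2*β) * (M.mulVec (v (t*x)) ⬝ᵥ v (t*y))‖
          = t ^ (2*β) * |M.mulVec (v (t*x)) ⬝ᵥ v (t*y)| := by
            rw [Real.norm_eq_abs, abs_mul, abs_of_pos hrp]
        _ ≤ t ^ (2*β) * (K * (‖v (t*x)‖ * ‖v (t*y)‖)) :=
            mul_le_mul_of_nonneg_left hdot hrp.le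
        _ = K * ((x*y) ^ (-β) * (P * Q)) := by rw [← hXX]; ring
        _ ≤ K * ((x*y) ^ (-β) * ((P^2 + Q^2)/2)) := by
            have hprod : P * Q ≤ (P^2 + Q^2)/2 := by nlinarith [sq_nonneg (P - Q)]
            have h2 : (0:ℝ) < (x*y) ^ (-β) := Real.rpow_pos_of_pos hxy0 _
            exact mul_le_mul_of_nonneg_left (mul_le_mul_of_nonneg_left hprod h2.le) hK
        _ = K * (x*y) ^ (-β) / 2 * (P^2 + Q^2) := by ring
  -- integrability of f1 and f2
  have hIf1 : IntegrableOn f1 (Ioi 1) := hInt Ω₁ α hL2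
  have hIf2 : IntegrableOn f2 (Ioi 1) := by
    refine (hInt Ωₘ (α - 1) hL2').congr_fun ?_ measurableSet_Ioi
    intro t ht
    have ht0 : (0:ℝ) < t := lt_trans one_pos ht
    have e2 : t ^ (2*(α-1)) = t ^ (2*α) * t⁻¹ * t⁻¹ := by
      rw [show 2*(α-1) = 2*α + (-1) + (-1) by ring, Real.rpow_add ht0, Real.rpow_add ht0,
        Real.rpow_neg_one]
    simp only [hf2def, e2]
  have hIg' : IntegrableOn g' (Ioi 1) :=
    (hIf1.const_mul (y - x)).add (hIf2.const_mul ((x - y)/(x*y)))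
  -- decay of g at infinity
  set KJ : ℝ := ∑ i, ∑ j, |J i j| with hKJdef
  have hKJ : 0 ≤ KJ := by positivity
  have hgrowx : Tendsto (fun t : ℝ => t * x) atTop atTop :=
    Tendsto.atTop_mul_const hx0 tendsto_id
  have hgrowy : Tendsto (fun t : ℝ => t * y) atTop atTop :=
    Tendsto.atTop_mul_const hy0 tendsto_id
  have hp : Tendsto (fun t : ℝ => ‖(t*x) ^ α • v (t*x)‖) atTop (nhds 0) := by
    exact hdecay.comp hgrowx
  have hq : Tendsto (fun t : ℝ => ‖(t*y) ^ α • v (t*y)‖) atTop (nhds 0) := by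
    exact hdecay.comp hgrowy
  have hlim : Tendsto
      (fun t : ℝ => (KJ * (x*y) ^ (-α)) * (‖(t*x) ^ α • v (t*x)‖ * ‖(t*y) ^ α • v (t*y)‖))
      atTop (nhds 0) := by
    have := (hp.mul hq).const_mul (KJ * (x*y) ^ (-α))
    simpa using this
  have htends : Tendsto g atTop (nhds 0) := by
    rw [tendsto_zero_iff_abs_tendsto_zero]
    refine squeeze_zero' (Eventually.of_forall fun t => abs_nonneg _) ?_ hlim
    filter_upwards [eventually_ge_atTop (1:ℝ)] with t ht
    have ht0 : (0:ℝ) < t := lt_of_lt_of_le one_pos ht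
    have hrp : (0:ℝ) < t ^ (2*α) := Real.rpow_pos_of_pos ht0 _
    have hc : (x*y) ^ (-α) * (x*y) ^ α = 1 := by
      rw [← Real.rpow_add hxy0]; simp
    have hXX : t ^ (2*α) * (‖v (t*x)‖ * ‖v (t*y)‖)
        = (x*y) ^ (-α) * (‖(t*x) ^ α • v (t*x)‖ * ‖(t*y) ^ α • v (t*y)‖) := by
      rw [hPQ α t ht0]
      linear_combination (-(t ^ (2*α) * (‖v (t*x)‖ * ‖v (t*y)‖))) * hc
    have hdot := dot_bound' J (v (t*x)) (v (t*y))
    calc |g t| = t ^ (2*α) * |J.mulVec (v (t*x)) ⬝ᵥ v (t*y)| := by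
          rw [hgdef, abs_mul, abs_of_pos hrp]
      _ ≤ t ^ (2*α) * (KJ * (‖v (t*x)‖ * ‖v (t*y)‖)) :=
          mul_le_mul_of_nonneg_left hdot hrp.le
      _ = KJ * ((x*y) ^ (-α) * (‖(t*x) ^ α • v (t*x)‖ * ‖(t*y) ^ α • v (t*y)‖)) := by
          rw [← hXX]; ring
      _ = (KJ * (x*y) ^ (-α)) * (‖(t*x) ^ α • v (t*x)‖ * ‖(t*y) ^ α • v (t*y)‖) := by ring
  -- FTC on (1, ∞)
  have hcont1 : ContinuousWithinAt g (Ici 1) 1 :=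
    (hderiv 1 le_rfl).continuousAt.continuousWithinAt
  have hFTC : ∫ t in Ioi (1:ℝ), g' t = 0 - g 1 :=
    integral_Ioi_of_hasDerivAt_of_tendsto hcont1 (fun t ht => hderiv t (le_of_lt ht))
      hIg' htends
  have hg1 : g 1 = J.mulVec (v x) ⬝ᵥ v y := by simp [hgdef]
  -- rewrite the integrand
  have hptwise : EqOn
      (fun t : ℝ => t ^ (2 * α) * (x * y) ^ ((2 * α + 1) / 2) *
            ((Ω₁.mulVec (v (t * x))) ⬝ᵥ (v (t * y)))
          - t ^ (2 * α - 2) * (x * y) ^ ((2 * α - 1) / 2) *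
            ((Ωₘ.mulVec (v (t * x))) ⬝ᵥ (v (t * y))))
      (fun t : ℝ => (-(x*y) ^ ((2*α+1)/2)/(x-y)) * g' t) (Ioi 1) := by
    intro t ht
    have ht0 : (0:ℝ) < t := lt_trans one_pos ht
    have e2 : t ^ (2*α - 2) = t ^ (2*α) * t⁻¹ * t⁻¹ := by
      rw [show 2*α - 2 = 2*α + (-1) + (-1) by ring, Real.rpow_add ht0, Real.rpow_add ht0,
        Real.rpow_neg_one]
    have e3 : (x*y) ^ ((2*α-1)/2) = (x*y) ^ ((2*α+1)/2) * (x*y)⁻¹ := by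
      rw [show (2*α-1)/2 = (2*α+1)/2 - 1 by ring, Real.rpow_sub hxy0, Real.rpow_one,
        div_eq_mul_inv]
    show t ^ (2 * α) * (x * y) ^ ((2 * α + 1) / 2) * ((Ω₁.mulVec (v (t * x))) ⬝ᵥ (v (t * y)))
          - t ^ (2 * α - 2) * (x * y) ^ ((2 * α - 1) / 2) * ((Ωₘ.mulVec (v (t * x))) ⬝ᵥ (v (t * y)))
        = (-(x*y) ^ ((2*α+1)/2)/(x-y)) *
          ((y - x) * (t ^ (2*α) * (Ω₁.mulVec (v (t*x)) ⬝ᵥ v (t*y)))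
            + ((x - y)/(x*y)) * (t ^ (2*α) * t⁻¹ * t⁻¹ * (Ωₘ.mulVec (v (t*x)) ⬝ᵥ v (t*y))))
    rw [e2, e3]
    set A : ℝ := Ω₁.mulVec (v (t*x)) ⬝ᵥ v (t*y)
    set B : ℝ := Ωₘ.mulVec (v (t*x)) ⬝ᵥ v (t*y)
    set T : ℝ := t ^ (2*α)
    set c : ℝ := (x*y) ^ ((2*α+1)/2)
    have h₁ : -c/(x-y) * (y-x) = c := by field_simp; ring
    have h₂ : -c/(x-y) * ((x-y)/(x*y)) = -(c * (x*y)⁻¹) := by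
      field_simp
    linear_combination (-(T*A))*h₁ + (-(T*t⁻¹*t⁻¹*B))*h₂
  rw [setIntegral_congr_fun measurableSet_Ioi hptwise, integral_const_mul, hFTC, hg1]
  set D : ℝ := J.mulVec (v x) ⬝ᵥ v y
  set c : ℝ := (x*y) ^ ((2*α+1)/2)
  ring
end
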